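/- arXiv:1908.09694 — 2 statements merged into one kernel-verified Lean document; each statement's English description precedes it below -/
import Mathlib

section
/- Let e ≥ 3 be odd, t ≥ 0, and let λ and μ be partitions of the same size n, both with 2-core Δ_t. If the multiset of residues modulo e of the contents of the boxes of τ(λ) equals the multiset of residues modulo e of the contents of the boxes of τ(μ), then λ and μ have the same e-core. -/
namespace GUnBranching

/-- A partition, given by its (0-indexed) weakly decreasing, eventually zero
sequence of parts: `part k` is the (k+1)-st part `λ_{k+1}`. -/
structure Partition where
  part : ℕ → ℕ
  antitone : ∀ i j : ℕ, i ≤ j → part j ≤ part i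
  eventually_zero : ∃ N : ℕ, ∀ n : ℕ, N ≤ n → part n = 0

namespace Partition

/-- The set of boxes (row, column) (0-indexed) of the Young diagram of a partition. -/
def boxSet (p : Partition) : Set (ℕ × ℕ) := {b | b.2 < p.part b.1}

/-- The size `|λ|` of a partition: the number of boxes of its Young diagram. -/
noncomputable def size (p : Partition) : ℕ := p.boxSet.ncard

/-- The β-set `β(λ) = {λ_k - k + 1 : k ≥ 1}` (0-indexed: `{part k - k : k ∈ ℕ}`). -/
def betaSet (p : Partition) : Set ℤ := {z | ∃ k : ℕ, z = (p.part k : ℤ) - k}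

/-- The charged β-set `{λ_k + s - k + 1 : k ≥ 1}` of `(λ, s)`. -/
def chargedBetaSet (p : Partition) (s : ℤ) : Set ℤ :=
  {z | ∃ k : ℕ, z = (p.part k : ℤ) + s - k}

/-- The number of (nonzero) parts of a partition. -/
noncomputable def length (p : Partition) : ℕ := {k : ℕ | p.part k ≠ 0}.ncard

end Partition

/-- The empty partition `∅`. -/
def emptyPartition : Partition :=
  ⟨fun _ => 0, fun _ _ _ => le_rfl, ⟨0, fun _ _ => rfl⟩⟩

/-- The partition `3^a 2^b 1^c` (a parts equal to 3, b parts equal to 2, c parts equal to 1). -/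
def threeTwoOne (a b c : ℕ) : Partition where
  part k := if k < a then 3 else if k < a + b then 2 else if k < a + b + c then 1 else 0
  antitone i j h := by split_ifs <;> omega
  eventually_zero := ⟨a + b + c, fun n hn => by split_ifs <;> omega⟩

/-- The column partition `1^m`. -/
def column (m : ℕ) : Partition := threeTwoOne 0 0 m

/-- The staircase partition `Δ_t = (t, t-1, …, 2, 1)`. -/
def staircase (t : ℕ) : Partition where
  part k := t - k
  antitone i j h := Nat.sub_le_sub_left h t
  eventually_zero := ⟨t, fun n hn => Nat.sub_eq_zero_of_le hn⟩

/-- The partition `Δ_t ⊔ 1^r` (staircase with a column of `r` extra parts equal to 1). -/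
def staircaseColumn (t r : ℕ) : Partition where
  part k := if k < t then t - k else if k < t + r then 1 else 0
  antitone i j h := by split_ifs <;> omega
  eventually_zero := ⟨t + r, fun n hn => by split_ifs <;> omega⟩

/-- `p ⊔ 1^r` : append `r` extra parts equal to 1 to the partition `p`. -/
noncomputable def appendOnes (p : Partition) (r : ℕ) : Partition where
  part k := max (p.part k) (if k < p.length + r then 1 else 0)
  antitone i j h := max_le_max (p.antitone i j h) (by split_ifs <;> omega)
  eventually_zero := by
    obtain ⟨N, hN⟩ := p.eventually_zero
    refine ⟨max N (p.length + r), fun n hn => ?_⟩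
    have h1 : p.part n = 0 := hN n (le_trans (le_max_left _ _) hn)
    have h2 : ¬ n < p.length + r := by
      have := le_trans (le_max_right N (p.length + r)) hn
      omega
    simp [h1, h2]

/-- `mu` is obtained from `lam` by removing one rim `e`-hook: on β-sets, a bead `x`
with an empty spot at `x - e` is moved to `x - e`. -/
def RemoveHook (e : ℕ) (lam mu : Partition) : Prop :=
  ∃ x : ℤ, x ∈ lam.betaSet ∧ (x - e) ∉ lam.betaSet ∧
    mu.betaSet = insert (x - e) (lam.betaSet \ {x})

/-- A partition is an `e`-core if no rim `e`-hook can be removed from it. -/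
def IsECore (e : ℕ) (p : Partition) : Prop := ∀ mu : Partition, ¬ RemoveHook e p mu

/-- `core` is the `e`-core of `lam`: it is obtained from `lam` by repeatedly removing
rim `e`-hooks, and no further rim `e`-hook can be removed. -/
def HasECore (e : ℕ) (lam core : Partition) : Prop :=
  Relation.ReflTransGen (RemoveHook e) lam core ∧ IsECore e core

/-- `lam` and `mu` have the same `e`-core. -/
def SameECore (e : ℕ) (lam mu : Partition) : Prop :=
  ∃ core : Partition, HasECore e lam core ∧ HasECore e mu core

/-- `(q1, q2)` is the 2-quotient of `lam`: the odd (resp. even) β-numbers of `lam`,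
transformed by `v ↦ (v+1)/2` (resp. `v ↦ v/2`), form the β-set of `q1` (resp. `q2`)
for a suitable charge. -/
def IsTwoQuotient (lam q1 q2 : Partition) : Prop :=
  (∃ c : ℤ, q1.chargedBetaSet c = {z : ℤ | 2 * z - 1 ∈ lam.betaSet}) ∧
  (∃ c : ℤ, q2.chargedBetaSet c = {z : ℤ | 2 * z ∈ lam.betaSet})

/-- The charge `s_t`: `(-(t+1+e)/2, t/2)` for even `t`, `(-(t+1)/2, (t+e)/2)` for odd `t`. -/
def tauCharge (e t : ℕ) : ℤ × ℤ :=
  if t % 2 = 0 then (-(((t : ℤ) + 1 + e) / 2), (t : ℤ) / 2)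
  else (-(((t : ℤ) + 1) / 2), ((t : ℤ) + e) / 2)

/-- `bp` is the twisted 2-quotient `τ(lam)` of `lam`, a partition with 2-core `Δ_t`:
it is the 2-quotient for even `t` and the swapped 2-quotient for odd `t`; the
corresponding charge is `tauCharge e t`. -/
def IsTwistedQuotient (t : ℕ) (lam : Partition) (bp : Partition × Partition) : Prop :=
  HasECore 2 lam (staircase t) ∧
  (if t % 2 = 0 then IsTwoQuotient lam bp.1 bp.2 else IsTwoQuotient lam bp.2 bp.1)

/-- The abacus of a charged bipartition: positions are (column, row) where row
`0 : Fin 2` is the bottom row (first component, charge `s.1`) and row `1 : Fin 2`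
the top row (second component, charge `s.2`). -/
def abacus (bp : Partition × Partition) (s : ℤ × ℤ) : Set (ℤ × Fin 2) :=
  {b | b.1 ∈ (if b.2 = (0 : Fin 2) then bp.1.chargedBetaSet s.1 else bp.2.chargedBetaSet s.2)}

/-- `P` is an `e`-period of the abacus `A`: beads `(x, r 0), (x-1, r 1), …, (x-e+1, r (e-1))`
of `A` where `x` is the largest column containing a bead of `A`, `r i = 0` (bottom row)
whenever `(x - i, bottom)` is a bead of `A` (for `i < e-1`), and once in the bottom row the
period stays in the bottom row. -/
def IsEPeriodOf (e : ℕ) (A P : Set (ℤ × Fin 2)) : Prop :=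
  ∃ (x : ℤ) (r : ℕ → Fin 2),
    P = {b | ∃ i : ℕ, i < e ∧ b = ((x - i : ℤ), r i)} ∧
    (∀ i : ℕ, i < e → ((x - i : ℤ), r i) ∈ A) ∧
    (∀ b ∈ A, b.1 ≤ x) ∧
    (∀ i : ℕ, i + 1 < e → ((x - i : ℤ), (0 : Fin 2)) ∈ A → r i = 0) ∧
    (∀ i : ℕ, i + 1 < e → r i = 0 → r (i + 1) = 0)

/-- `P 0, P 1, P 2, …` is the sequence of `e`-periods of `A`:
each `P k` is the `e`-period of `A` minus the previous periods. -/
def IsPeriodSeq (e : ℕ) (A : Set (ℤ × Fin 2)) (P : ℕ → Set (ℤ × Fin 2)) : Prop :=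
  ∀ k : ℕ, IsEPeriodOf e (A \ ⋃ i ∈ Finset.range k, P i) (P k)

/-- The abacus `A` is totally `e`-periodic: the `k`-th `e`-period exists for every `k`. -/
def TotallyPeriodic (e : ℕ) (A : Set (ℤ × Fin 2)) : Prop :=
  ∃ P : ℕ → Set (ℤ × Fin 2), IsPeriodSeq e A P

/-- `P` is the `(k+1)`-st `e`-period of `A` (so `k = 0` gives the first `e`-period). -/
def IsKthPeriod (e : ℕ) (A : Set (ℤ × Fin 2)) (k : ℕ) (P : Set (ℤ × Fin 2)) : Prop :=
  ∃ Q : ℕ → Set (ℤ × Fin 2),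
    (∀ i : ℕ, i ≤ k → IsEPeriodOf e (A \ ⋃ j ∈ Finset.range i, Q j) (Q i)) ∧ Q k = P

/-- Shift a set of abacus positions one step to the right. -/
def shiftRight (P : Set (ℤ × Fin 2)) : Set (ℤ × Fin 2) := {b | (b.1 - 1, b.2) ∈ P}

/-- Edge of the `sl_∞`-crystal moving the `(k+1)`-st `e`-period one step to the right:
the shifted period must again be the `(k+1)`-st `e`-period of the resulting abacus. -/
def SlInfEdgeAt (e : ℕ) (s : ℤ × ℤ) (k : ℕ) (lam mu : Partition × Partition) : Prop :=
  TotallyPeriodic e (abacus lam s) ∧ TotallyPeriodic e (abacus mu s) ∧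
  ∃ P : Set (ℤ × Fin 2),
    IsKthPeriod e (abacus lam s) k P ∧
    abacus mu s = (abacus lam s \ P) ∪ shiftRight P ∧
    IsKthPeriod e (abacus mu s) k (shiftRight P)

/-- Edge of the `sl_∞`-crystal. -/
def SlInfEdge (e : ℕ) (s : ℤ × ℤ) (lam mu : Partition × Partition) : Prop :=
  ∃ k : ℕ, SlInfEdgeAt e s k lam mu

/-- A source vertex of the `sl_∞`-crystal: a vertex (totally `e`-periodic abacus)
with no incoming edge. -/
def IsSlInfSource (e : ℕ) (s : ℤ × ℤ) (bp : Partition × Partition) : Prop :=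
  TotallyPeriodic e (abacus bp s) ∧ ∀ lam : Partition × Partition, ¬ SlInfEdge e s lam bp

/-- A box of a bipartition: (component, row, column), all 0-indexed
(component `0 : Fin 2` is the first component `λ¹`). -/
abbrev Box := Fin 2 × ℕ × ℕ

/-- The component of a bipartition indexed by `j : Fin 2`. -/
def comp (bp : Partition × Partition) (j : Fin 2) : Partition :=
  if j = 0 then bp.1 else bp.2

/-- `b` is a box of the bipartition `bp`. -/
def IsBoxOf (bp : Partition × Partition) (b : Box) : Prop :=
  b.2.2 < (comp bp b.1).part b.2.1

/-- The (charged) content `ct(b) = y - x + s_j` of a box `b = (j, x, y)`. -/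
def content (s : ℤ × ℤ) (b : Box) : ℤ :=
  (b.2.2 : ℤ) - (b.2.1 : ℤ) + (if b.1 = 0 then s.1 else s.2)

/-- `b` is an addable box of the bipartition `bp`. -/
def IsAddable (bp : Partition × Partition) (b : Box) : Prop :=
  b.2.2 = (comp bp b.1).part b.2.1 ∧
  (b.2.1 = 0 ∨ (comp bp b.1).part b.2.1 < (comp bp b.1).part (b.2.1 - 1))

/-- `b` is a removable box of the bipartition `bp`. -/
def IsRemovable (bp : Partition × Partition) (b : Box) : Prop :=
  b.2.2 + 1 = (comp bp b.1).part b.2.1 ∧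
  (comp bp b.1).part (b.2.1 + 1) < (comp bp b.1).part b.2.1

/-- The total order on addable/removable boxes: `b ≤ b'` iff `b = b'`, or
`ct(b) < ct(b')`, or the contents are equal, `b` lies in the second component and
`b'` in the first. -/
def boxLE (s : ℤ × ℤ) (b b' : Box) : Prop :=
  b = b' ∨ content s b < content s b' ∨
    (content s b = content s b' ∧ b.1 = 1 ∧ b'.1 = 0)

/-- The set of addable or removable boxes of residue `i` (the letters of the `i`-word). -/
def IWord (e : ℕ) (s : ℤ × ℤ) (bp : Partition × Partition) (i : ZMod e) : Set Box :=
  {b | (IsAddable bp b ∨ IsRemovable bp b) ∧ ((content s b : ZMod e) = i)}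

/-- A removable box of residue `i` surviving the Kashiwara cancellation: reading the
`i`-word in increasing order and cancelling each removable box with a following addable
box (recursively cancelling adjacent removable-addable pairs), `b` is not cancelled.
Equivalently, every final segment of the `i`-word starting at `b` contains strictly
more removable than addable boxes. -/
def SurvivingRemovable (e : ℕ) (s : ℤ × ℤ) (bp : Partition × Partition)
    (i : ZMod e) (b : Box) : Prop :=
  b ∈ IWord e s bp i ∧ IsRemovable bp b ∧
  ∀ c ∈ IWord e s bp i, boxLE s b c →
    {d : Box | d ∈ IWord e s bp i ∧ IsAddable bp d ∧ boxLE s b d ∧ boxLE s d c}.ncard <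
    {d : Box | d ∈ IWord e s bp i ∧ IsRemovable bp d ∧ boxLE s b d ∧ boxLE s d c}.ncard

/-- The good removable `i`-box: the smallest removable `i`-box surviving the
Kashiwara cancellation. -/
def IsGoodRemovable (e : ℕ) (s : ℤ × ℤ) (bp : Partition × Partition)
    (i : ZMod e) (b : Box) : Prop :=
  SurvivingRemovable e s bp i b ∧
  ∀ b' : Box, SurvivingRemovable e s bp i b' → boxLE s b b'

/-- An addable box of residue `i` surviving the Kashiwara cancellation. -/
def SurvivingAddable (e : ℕ) (s : ℤ × ℤ) (bp : Partition × Partition)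
    (i : ZMod e) (b : Box) : Prop :=
  b ∈ IWord e s bp i ∧ IsAddable bp b ∧
  ∀ c ∈ IWord e s bp i, boxLE s c b →
    {d : Box | d ∈ IWord e s bp i ∧ IsRemovable bp d ∧ boxLE s c d ∧ boxLE s d b}.ncard <
    {d : Box | d ∈ IWord e s bp i ∧ IsAddable bp d ∧ boxLE s c d ∧ boxLE s d b}.ncard

/-- The good addable `i`-box: the largest addable `i`-box surviving the
Kashiwara cancellation. -/
def IsGoodAddable (e : ℕ) (s : ℤ × ℤ) (bp : Partition × Partition)
    (i : ZMod e) (b : Box) : Prop :=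
  SurvivingAddable e s bp i b ∧
  ∀ b' : Box, SurvivingAddable e s bp i b' → boxLE s b' b

/-- A source vertex of the `ŝl_e`-crystal: no good removable `i`-box for any residue `i`. -/
def IsSlESource (e : ℕ) (s : ℤ × ℤ) (bp : Partition × Partition) : Prop :=
  ∀ (i : ZMod e) (b : Box), ¬ IsGoodRemovable e s bp i b

/-- `bp'` is obtained from `bp` by adding the box `b`. -/
def AddBox (bp : Partition × Partition) (b : Box) (bp' : Partition × Partition) : Prop :=
  if b.1 = 0 then
    bp'.2 = bp.2 ∧ bp'.1.part = Function.update bp.1.part b.2.1 (bp.1.part b.2.1 + 1)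
  else
    bp'.1 = bp.1 ∧ bp'.2.part = Function.update bp.2.part b.2.1 (bp.2.part b.2.1 + 1)

/-- Dominance order: `Dominates mu la` means `la ⊴ mu`. -/
def Dominates (mu la : Partition) : Prop :=
  ∀ k : ℕ, ∑ i ∈ Finset.range k, la.part i ≤ ∑ i ∈ Finset.range k, mu.part i
/- ===================== auxiliary development ===================== -/

section Aux

open Set

/-- deep: every integer `≤ a` belongs to `S`. -/
def GDeep (a : ℤ) (S : Set ℤ) : Prop := ∀ x : ℤ, x ≤ a → x ∈ S

/-- bounded above -/
def GBdd (S : Set ℤ) : Prop := ∃ b : ℤ, ∀ x ∈ S, x ≤ b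

/-- number of elements of `S` in the window `(a, ∞)` with residue `i` mod `e`. -/
noncomputable def wcnt (e : ℕ) (S : Set ℤ) (i : ZMod e) (a : ℤ) : ℕ :=
  (S ∩ {x : ℤ | a < x ∧ (x : ZMod e) = i}).ncard

/-- number of elements of `S` in the window `(a, ∞)`. -/
noncomputable def tcnt (S : Set ℤ) (a : ℤ) : ℕ :=
  (S ∩ {x : ℤ | a < x}).ncard

lemma gbdd_win_finite {S : Set ℤ} (hS : GBdd S) (a : ℤ) :
    (S ∩ {x : ℤ | a < x}).Finite := by
  obtain ⟨b, hb⟩ := hS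
  refine (Set.finite_Ioc a b).subset ?_
  rintro x ⟨hx, hax⟩
  exact ⟨hax, hb x hx⟩

lemma gbdd_rwin_finite {e : ℕ} {S : Set ℤ} (hS : GBdd S) (i : ZMod e) (a : ℤ) :
    (S ∩ {x : ℤ | a < x ∧ (x : ZMod e) = i}).Finite := by
  refine (gbdd_win_finite hS a).subset ?_
  rintro x ⟨hx, hax, _⟩
  exact ⟨hx, hax⟩

lemma ncard_insert_diff {T : Set ℤ} (hT : T.Finite) {x y : ℤ} (hx : x ∈ T) (hy : y ∉ T) :
    (insert y (T \ {x})).ncard = T.ncard := by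
  have h1 : (T \ {x}).ncard + 1 = T.ncard := Set.ncard_diff_singleton_add_one hx hT
  have h2 : (insert y (T \ {x})).ncard = (T \ {x}).ncard + 1 := by
    refine Set.ncard_insert_of_notMem ?_ hT.diff
    rintro ⟨hyT, _⟩
    exact hy hyT
  omega

lemma wcnt_strip {e : ℕ} {S : Set ℤ} (hS : GBdd S) {a a' : ℤ} (h : GDeep a S)
    (haa : a' ≤ a) (i : ZMod e) :
    wcnt e S i a' = wcnt e S i a + ({x : ℤ | a' < x ∧ x ≤ a ∧ (x : ZMod e) = i}).ncard := by
  have hset : S ∩ {x : ℤ | a' < x ∧ (x : ZMod e) = i} =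
      (S ∩ {x : ℤ | a < x ∧ (x : ZMod e) = i}) ∪
        {x : ℤ | a' < x ∧ x ≤ a ∧ (x : ZMod e) = i} := by
    ext x
    constructor
    · rintro ⟨hxS, hx1, hx2⟩
      rcases le_or_gt x a with hxa | hxa
      · exact Or.inr ⟨hx1, hxa, hx2⟩
      · exact Or.inl ⟨hxS, hxa, hx2⟩
    · rintro (⟨hxS, hx1, hx2⟩ | ⟨hx1, hx2, hx3⟩)
      · exact ⟨hxS, lt_of_le_of_lt haa hx1, hx2⟩
      · exact ⟨h x hx2, hx1, hx3⟩
  have hdisj : Disjoint (S ∩ {x : ℤ | a < x ∧ (x : ZMod e) = i})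
      {x : ℤ | a' < x ∧ x ≤ a ∧ (x : ZMod e) = i} := by
    rw [Set.disjoint_left]
    intro z hz1 hz2
    simp only [Set.mem_inter_iff, Set.mem_setOf_eq] at hz1 hz2
    omega
  have hf2 : ({x : ℤ | a' < x ∧ x ≤ a ∧ (x : ZMod e) = i}).Finite := by
    refine (Set.finite_Ioc a' a).subset ?_
    rintro x ⟨hx1, hx2, _⟩
    exact ⟨hx1, hx2⟩
  rw [wcnt, hset, Set.ncard_union_eq hdisj (gbdd_rwin_finite hS i a) hf2, wcnt]

lemma tcnt_strip {S : Set ℤ} (hS : GBdd S) {a a' : ℤ} (h : GDeep a S) (haa : a' ≤ a) :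
    tcnt S a' = tcnt S a + (a - a').toNat := by
  have hset : S ∩ {x : ℤ | a' < x} =
      (S ∩ {x : ℤ | a < x}) ∪ Set.Ioc a' a := by
    ext x
    constructor
    · rintro ⟨hxS, hx1⟩
      rcases le_or_gt x a with hxa | hxa
      · exact Or.inr ⟨hx1, hxa⟩
      · exact Or.inl ⟨hxS, hxa⟩
    · rintro (⟨hxS, hx1⟩ | ⟨hx1, hx2⟩)
      · exact ⟨hxS, lt_of_le_of_lt haa hx1⟩
      · exact ⟨h x hx2, hx1⟩
  have hdisj : Disjoint (S ∩ {x : ℤ | a < x}) (Set.Ioc a' a) := by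
    rw [Set.disjoint_left]
    intro z hz1 hz2
    simp only [Set.mem_inter_iff, Set.mem_setOf_eq, Set.mem_Ioc] at hz1 hz2
    omega
  have hcard : (Set.Ioc a' a).ncard = (a - a').toNat := by
    rw [Set.ncard_eq_toFinset_card', Set.toFinset_Ioc, Int.card_Ioc]
  rw [tcnt, hset, Set.ncard_union_eq hdisj (gbdd_win_finite hS a) (Set.finite_Ioc a' a),
    tcnt, hcard]

lemma wcnt_move {e : ℕ} {S : Set ℤ} (hS : GBdd S) {x y : ℤ} (hx : x ∈ S) (hy : y ∉ S)
    {a : ℤ} (hax : a < x) (hay : a < y) (i : ZMod e) :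
    (wcnt e (insert y (S \ {x})) i a : ℤ) =
      (wcnt e S i a : ℤ) + (if (y : ZMod e) = i then 1 else 0)
        - (if (x : ZMod e) = i then 1 else 0) := by
  classical
  have hfin : (S ∩ {z : ℤ | a < z ∧ (z : ZMod e) = i}).Finite := gbdd_rwin_finite hS i a
  by_cases hyi : (y : ZMod e) = i <;> by_cases hxi : (x : ZMod e) = i
  · have hset : insert y (S \ {x}) ∩ {z : ℤ | a < z ∧ (z : ZMod e) = i} =
        insert y ((S ∩ {z : ℤ | a < z ∧ (z : ZMod e) = i}) \ {x}) := by
      ext z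
      simp only [Set.mem_inter_iff, Set.mem_insert_iff, Set.mem_diff,
        Set.mem_singleton_iff, Set.mem_setOf_eq]
      constructor
      · rintro ⟨(rfl | ⟨hzS, hzx⟩), hzW⟩
        · exact Or.inl rfl
        · exact Or.inr ⟨⟨hzS, hzW⟩, hzx⟩
      · rintro (rfl | ⟨⟨hzS, hzW⟩, hzx⟩)
        · exact ⟨Or.inl rfl, hay, hyi⟩
        · exact ⟨Or.inr ⟨hzS, hzx⟩, hzW⟩
    have hxmem : x ∈ S ∩ {z : ℤ | a < z ∧ (z : ZMod e) = i} := ⟨hx, hax, hxi⟩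
    have hcard := ncard_insert_diff hfin hxmem (y := y) (fun hc => hy hc.1)
    rw [wcnt, wcnt, hset, hcard, if_pos hyi, if_pos hxi]
    ring
  · have hset : insert y (S \ {x}) ∩ {z : ℤ | a < z ∧ (z : ZMod e) = i} =
        insert y (S ∩ {z : ℤ | a < z ∧ (z : ZMod e) = i}) := by
      ext z
      simp only [Set.mem_inter_iff, Set.mem_insert_iff, Set.mem_diff,
        Set.mem_singleton_iff, Set.mem_setOf_eq]
      constructor
      · rintro ⟨(rfl | ⟨hzS, hzx⟩), hzW⟩
        · exact Or.inl rfl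
        · exact Or.inr ⟨hzS, hzW⟩
      · rintro (rfl | ⟨hzS, hzW⟩)
        · exact ⟨Or.inl rfl, hay, hyi⟩
        · refine ⟨Or.inr ⟨hzS, ?_⟩, hzW⟩
          rintro rfl
          exact hxi hzW.2
    have hcard : (insert y (S ∩ {z : ℤ | a < z ∧ (z : ZMod e) = i})).ncard
        = (S ∩ {z : ℤ | a < z ∧ (z : ZMod e) = i}).ncard + 1 := by
      refine Set.ncard_insert_of_notMem ?_ hfin
      rintro ⟨hyS, _⟩
      exact hy hyS
    rw [wcnt, wcnt, hset, hcard, if_pos hyi, if_neg hxi]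
    push_cast
    ring
  · have hset : insert y (S \ {x}) ∩ {z : ℤ | a < z ∧ (z : ZMod e) = i} =
        (S ∩ {z : ℤ | a < z ∧ (z : ZMod e) = i}) \ {x} := by
      ext z
      simp only [Set.mem_inter_iff, Set.mem_insert_iff, Set.mem_diff,
        Set.mem_singleton_iff, Set.mem_setOf_eq]
      constructor
      · rintro ⟨(rfl | ⟨hzS, hzx⟩), hzW⟩
        · exact absurd hzW.2 hyi
        · exact ⟨⟨hzS, hzW⟩, hzx⟩
      · rintro ⟨⟨hzS, hzW⟩, hzx⟩
        exact ⟨Or.inr ⟨hzS, hzx⟩, hzW⟩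
    have hxmem2 : x ∈ S ∩ {z : ℤ | a < z ∧ (z : ZMod e) = i} := ⟨hx, hax, hxi⟩
    have hcard : (S ∩ {z : ℤ | a < z ∧ (z : ZMod e) = i}).ncard
        = ((S ∩ {z : ℤ | a < z ∧ (z : ZMod e) = i}) \ {x}).ncard + 1 :=
      (Set.ncard_diff_singleton_add_one hxmem2 hfin).symm
    rw [wcnt, wcnt, hset, hcard, if_neg hyi, if_pos hxi]
    push_cast
    ring
  · have hset : insert y (S \ {x}) ∩ {z : ℤ | a < z ∧ (z : ZMod e) = i} =
        S ∩ {z : ℤ | a < z ∧ (z : ZMod e) = i} := by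
      ext z
      simp only [Set.mem_inter_iff, Set.mem_insert_iff, Set.mem_diff,
        Set.mem_singleton_iff, Set.mem_setOf_eq]
      constructor
      · rintro ⟨(rfl | ⟨hzS, hzx⟩), hzW⟩
        · exact absurd hzW.2 hyi
        · exact ⟨hzS, hzW⟩
      · rintro ⟨hzS, hzW⟩
        refine ⟨Or.inr ⟨hzS, ?_⟩, hzW⟩
        rintro rfl
        exact hxi hzW.2
    rw [wcnt, wcnt, hset, if_neg hyi, if_neg hxi]
    ring

lemma tcnt_move {S : Set ℤ} (hS : GBdd S) {x y : ℤ} (hx : x ∈ S) (hy : y ∉ S)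
    {a : ℤ} (hax : a < x) (hay : a < y) :
    tcnt (insert y (S \ {x})) a = tcnt S a := by
  classical
  have hfin : (S ∩ {z : ℤ | a < z}).Finite := gbdd_win_finite hS a
  have hset : insert y (S \ {x}) ∩ {z : ℤ | a < z}
      = insert y ((S ∩ {z : ℤ | a < z}) \ {x}) := by
    ext z
    simp only [Set.mem_inter_iff, Set.mem_insert_iff, Set.mem_diff,
      Set.mem_singleton_iff, Set.mem_setOf_eq]
    constructor
    · rintro ⟨(rfl | ⟨hzS, hzx⟩), hzW⟩
      · exact Or.inl rfl
      · exact Or.inr ⟨⟨hzS, hzW⟩, hzx⟩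
    · rintro (rfl | ⟨⟨hzS, hzW⟩, hzx⟩)
      · exact ⟨Or.inl rfl, hay⟩
      · exact ⟨Or.inr ⟨hzS, hzx⟩, hzW⟩
  rw [tcnt, tcnt, hset, ncard_insert_diff hfin ⟨hx, hax⟩ (fun hc => hy hc.1)]

lemma wcnt_shift (e : ℕ) (S : Set ℤ) (d : ℤ) (i : ZMod e) (a : ℤ) :
    wcnt e {x : ℤ | x - d ∈ S} i a = wcnt e S (i - (d : ZMod e)) (a - d) := by
  rw [wcnt, wcnt]
  have hset : {x : ℤ | x - d ∈ S} ∩ {x : ℤ | a < x ∧ (x : ZMod e) = i} =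
      (fun z => z + d) '' (S ∩ {x : ℤ | a - d < x ∧ (x : ZMod e) = i - (d : ZMod e)}) := by
    ext z
    simp only [Set.mem_inter_iff, Set.mem_setOf_eq, Set.mem_image]
    constructor
    · rintro ⟨hzS, hz1, hz2⟩
      refine ⟨z - d, ⟨hzS, by omega, ?_⟩, by ring⟩
      push_cast
      rw [hz2]
    · rintro ⟨w, ⟨hwS, hw1, hw2⟩, rfl⟩
      refine ⟨by simpa using hwS, by omega, ?_⟩
      push_cast
      simp [hw2]
  rw [hset, Set.ncard_image_of_injective _ (add_left_injective d)]

end Aux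

section Aux2

open Set

lemma Partition.beta_strictAnti (p : Partition) (s : ℤ) :
    StrictAnti (fun k : ℕ => (p.part k : ℤ) + s - k) := by
  intro k l hkl
  have h := p.antitone k l (le_of_lt hkl)
  simp only
  omega

lemma Partition.chargedBetaSet_eq_range (p : Partition) (s : ℤ) :
    p.chargedBetaSet s = Set.range (fun k : ℕ => (p.part k : ℤ) + s - k) := by
  ext x
  simp only [Partition.chargedBetaSet, Set.mem_setOf_eq, Set.mem_range, eq_comm]

lemma Partition.betaSet_eq (p : Partition) : p.betaSet = p.chargedBetaSet 0 := by
  ext x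
  constructor <;> rintro ⟨k, hk⟩ <;> exact ⟨k, by omega⟩

lemma Partition.chargedBetaSet_bdd (p : Partition) (s : ℤ) : GBdd (p.chargedBetaSet s) := by
  refine ⟨(p.part 0 : ℤ) + s, ?_⟩
  rintro x ⟨k, rfl⟩
  have h := p.antitone 0 k (Nat.zero_le k)
  omega

lemma Partition.chargedBetaSet_deep (p : Partition) (s : ℤ) {N : ℕ}
    (hN : ∀ n, N ≤ n → p.part n = 0) {a : ℤ} (ha : a ≤ s - N) :
    GDeep a (p.chargedBetaSet s) := by
  intro x hx
  refine ⟨(s - x).toNat, ?_⟩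
  have h2 : p.part (s - x).toNat = 0 := hN _ (by omega)
  rw [h2]
  omega

lemma Partition.chargedBetaSet_win (p : Partition) (s : ℤ) {N : ℕ}
    (hN : ∀ n, N ≤ n → p.part n = 0) {a : ℤ} (ha : a ≤ s - N) :
    p.chargedBetaSet s ∩ {x : ℤ | a < x} =
      (fun k : ℕ => (p.part k : ℤ) + s - k) '' {k : ℕ | (k : ℤ) < s - a} := by
  ext x
  simp only [Set.mem_inter_iff, Set.mem_setOf_eq, Set.mem_image]
  constructor
  · rintro ⟨⟨k, rfl⟩, hx⟩
    refine ⟨k, ?_, rfl⟩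
    by_contra hk
    push_neg at hk
    have h0 : p.part k = 0 := hN k (by omega)
    omega
  · rintro ⟨k, hk, rfl⟩
    exact ⟨⟨k, rfl⟩, by omega⟩

lemma Partition.chargedBetaSet_tcnt (p : Partition) (s : ℤ) {N : ℕ}
    (hN : ∀ n, N ≤ n → p.part n = 0) {a : ℤ} (ha : a ≤ s - N) :
    tcnt (p.chargedBetaSet s) a = (s - a).toNat := by
  rw [tcnt, Partition.chargedBetaSet_win p s hN ha,
    Set.ncard_image_of_injective _ (p.beta_strictAnti s).injective]
  have hs : {k : ℕ | (k : ℤ) < s - a} = Set.Iio (s - a).toNat := by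
    ext k
    simp only [Set.mem_setOf_eq, Set.mem_Iio]
    omega
  rw [hs, Set.ncard_eq_toFinset_card', Set.toFinset_Iio, Nat.card_Iio]

lemma gbdd_Iic (v : ℤ) : GBdd (Set.Iic v) := ⟨v, fun x hx => hx⟩

lemma gdeep_Iic {a v : ℤ} (h : a ≤ v) : GDeep a (Set.Iic v) := fun x hx => le_trans hx h

lemma tcnt_Iic (v a : ℤ) : tcnt (Set.Iic v) a = (v - a).toNat := by
  have hset : Set.Iic v ∩ {x : ℤ | a < x} = Set.Ioc a v := by
    ext x
    simp only [Set.mem_inter_iff, Set.mem_Iic, Set.mem_setOf_eq, Set.mem_Ioc]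
    tauto
  rw [tcnt, hset, Set.ncard_eq_toFinset_card', Set.toFinset_Ioc, Int.card_Ioc]

/-- the odd half of a β-set -/
def Hodd (S : Set ℤ) : Set ℤ := {z : ℤ | 2 * z - 1 ∈ S}

/-- the even half of a β-set -/
def Hev (S : Set ℤ) : Set ℤ := {z : ℤ | 2 * z ∈ S}

lemma Hodd_bdd {S : Set ℤ} (h : GBdd S) : GBdd (Hodd S) := by
  obtain ⟨b, hb⟩ := h
  refine ⟨max b 1, fun z hz => ?_⟩
  have := hb _ hz
  omega

lemma Hev_bdd {S : Set ℤ} (h : GBdd S) : GBdd (Hev S) := by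
  obtain ⟨b, hb⟩ := h
  refine ⟨max b 1, fun z hz => ?_⟩
  have := hb _ hz
  omega

lemma Hodd_deep {S : Set ℤ} {a b : ℤ} (h : GDeep a S) (hb : 2 * b - 1 ≤ a) :
    GDeep b (Hodd S) := fun z hz => h _ (by omega)

lemma Hev_deep {S : Set ℤ} {a b : ℤ} (h : GDeep a S) (hb : 2 * b ≤ a) :
    GDeep b (Hev S) := fun z hz => h _ (by omega)

lemma strictAnti_range_eq {f g : ℕ → ℤ} (hf : StrictAnti f) (hg : StrictAnti g)
    (h : Set.range f = Set.range g) : f = g := by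
  have key : ∀ k, f k = g k := by
    intro k
    induction k using Nat.strong_induction_on with
    | _ k ih =>
      have h1 : f k ∈ Set.range g := h ▸ Set.mem_range_self k
      obtain ⟨m, hm⟩ := h1
      have hmk : k ≤ m := by
        by_contra hlt
        push_neg at hlt
        have h2 : f m = g m := ih m hlt
        have h3 : f m = f k := h2.trans hm
        have := hf.injective h3
        omega
      have h4 : f k ≤ g k := by
        rw [← hm]
        exact hg.antitone hmk
      have h1' : g k ∈ Set.range f := h ▸ Set.mem_range_self k
      obtain ⟨m', hm'⟩ := h1'
      have hmk' : k ≤ m' := by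
        by_contra hlt
        push_neg at hlt
        have h2 : f m' = g m' := ih m' hlt
        have h3 : g m' = g k := h2.symm.trans hm'
        have := hg.injective h3
        omega
      have h5 : g k ≤ f k := by
        rw [← hm']
        exact hf.antitone hmk'
      omega
  funext k
  exact key k

lemma Partition.betaSet_inj {p q : Partition} (h : p.betaSet = q.betaSet) : p = q := by
  have h0 : p.chargedBetaSet 0 = q.chargedBetaSet 0 := by
    rw [← p.betaSet_eq, ← q.betaSet_eq, h]
  rw [p.chargedBetaSet_eq_range, q.chargedBetaSet_eq_range] at h0
  have hfg := strictAnti_range_eq (p.beta_strictAnti 0) (q.beta_strictAnti 0) h0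
  have hpart : p.part = q.part := by
    funext k
    have := congrFun hfg k
    omega
  cases p
  cases q
  simp only at hpart
  subst hpart
  rfl

end Aux2

section Aux3

open Set

lemma mem_betaSet_staircase (t : ℕ) (x : ℤ) :
    x ∈ (staircase t).betaSet ↔
      (x ≤ -(t : ℤ)) ∨ (-(t : ℤ) ≤ x ∧ x ≤ t ∧ (x + t) % 2 = 0) := by
  constructor
  · rintro ⟨k, hk⟩
    have hpart : (staircase t).part k = t - k := rfl
    rw [hpart] at hk
    omega
  · intro h
    rcases h with h | h
    · refine ⟨(-x).toNat, ?_⟩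
      show x = ((t - (-x).toNat : ℕ) : ℤ) - ((-x).toNat : ℤ)
      omega
    · refine ⟨((t - x) / 2).toNat, ?_⟩
      show x = ((t - ((t - x) / 2).toNat : ℕ) : ℤ) - (((t - x) / 2).toNat : ℤ)
      omega

lemma Hodd_staircase_even {t : ℕ} (ht : t % 2 = 0) :
    Hodd ((staircase t).betaSet) = Set.Iic (-((t : ℤ) / 2)) := by
  ext z
  simp only [Hodd, Set.mem_setOf_eq, mem_betaSet_staircase, Set.mem_Iic]
  omega

lemma Hev_staircase_even {t : ℕ} (ht : t % 2 = 0) :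
    Hev ((staircase t).betaSet) = Set.Iic ((t : ℤ) / 2) := by
  ext z
  simp only [Hev, Set.mem_setOf_eq, mem_betaSet_staircase, Set.mem_Iic]
  omega

lemma Hodd_staircase_odd {t : ℕ} (ht : t % 2 = 1) :
    Hodd ((staircase t).betaSet) = Set.Iic (((t : ℤ) + 1) / 2) := by
  ext z
  simp only [Hodd, Set.mem_setOf_eq, mem_betaSet_staircase, Set.mem_Iic]
  omega

lemma Hev_staircase_odd {t : ℕ} (ht : t % 2 = 1) :
    Hev ((staircase t).betaSet) = Set.Iic (-(((t : ℤ) + 1) / 2)) := by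
  ext z
  simp only [Hev, Set.mem_setOf_eq, mem_betaSet_staircase, Set.mem_Iic]
  omega

lemma Partition.betaSet_bdd (p : Partition) : GBdd p.betaSet := by
  rw [p.betaSet_eq]
  exact p.chargedBetaSet_bdd 0

lemma removeHook_deep {E : ℕ} {p q : Partition} (h : RemoveHook E p q) {a : ℤ}
    (hd : GDeep a p.betaSet) : GDeep a q.betaSet := by
  obtain ⟨x, hx, hnx, hq⟩ := h
  intro y hy
  have hxa : a < x - E := by
    by_contra hc
    exact hnx (hd _ (by omega))
  rw [hq]
  exact Or.inr ⟨hd y hy, by simp only [Set.mem_singleton_iff]; omega⟩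

lemma removeHook_wcnt {e : ℕ} {p q : Partition} (h : RemoveHook e p q) {a : ℤ}
    (hd : GDeep a p.betaSet) (i : ZMod e) :
    wcnt e q.betaSet i a = wcnt e p.betaSet i a := by
  obtain ⟨x, hx, hnx, hq⟩ := h
  have hxa : a < x - e := by
    by_contra hc
    exact hnx (hd _ (by omega))
  have hres : ((x - (e : ℤ) : ℤ) : ZMod e) = ((x : ℤ) : ZMod e) := by
    push_cast
    simp
  have hmv := wcnt_move (e := e) p.betaSet_bdd hx hnx (by omega : a < x) hxa i
  rw [hres] at hmv
  rw [hq]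
  split_ifs at hmv with hc <;> [skip; skip] <;> omega

lemma chain_wcnt {e : ℕ} {p q : Partition} (h : Relation.ReflTransGen (RemoveHook e) p q)
    {a : ℤ} (hd : GDeep a p.betaSet) :
    GDeep a q.betaSet ∧ ∀ i : ZMod e, wcnt e q.betaSet i a = wcnt e p.betaSet i a := by
  induction h with
  | refl => exact ⟨hd, fun _ => rfl⟩
  | tail h1 h2 ih =>
    obtain ⟨hdq, hw⟩ := ih
    exact ⟨removeHook_deep h2 hdq, fun i => (removeHook_wcnt h2 hdq i).trans (hw i)⟩

lemma removeHook2_halves {p q : Partition} (h : RemoveHook 2 p q) {a b : ℤ}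
    (hd : GDeep a p.betaSet) (hb : 2 * b + 1 ≤ a) :
    tcnt (Hodd q.betaSet) b = tcnt (Hodd p.betaSet) b ∧
    tcnt (Hev q.betaSet) b = tcnt (Hev p.betaSet) b := by
  obtain ⟨x, hx, hnx, hq⟩ := h
  have hxa : a < x - 2 := by
    by_contra hc
    exact hnx (hd _ (by omega))
  rcases Int.even_or_odd x with ⟨u, hu⟩ | ⟨u, hu⟩
  · -- x = u + u even : the even half moves
    have hev : Hev q.betaSet = insert (u - 1) (Hev p.betaSet \ {u}) := by
      ext z
      simp only [Hev, Set.mem_setOf_eq, hq, Set.mem_insert_iff, Set.mem_diff,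
        Set.mem_singleton_iff]
      constructor
      · rintro (h1 | ⟨h1, h2⟩)
        · left; omega
        · right; exact ⟨h1, by omega⟩
      · rintro (rfl | ⟨h1, h2⟩)
        · left; omega
        · right; exact ⟨h1, by omega⟩
    have hodd : Hodd q.betaSet = Hodd p.betaSet := by
      ext z
      simp only [Hodd, Set.mem_setOf_eq, hq, Set.mem_insert_iff, Set.mem_diff,
        Set.mem_singleton_iff]
      constructor
      · rintro (h1 | ⟨h1, h2⟩)
        · omega
        · exact h1
      · intro h1
        right; exact ⟨h1, by omega⟩
    constructor
    · rw [hodd]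
    · rw [hev]
      refine tcnt_move (Hev_bdd p.betaSet_bdd) ?_ ?_ ?_ ?_
      · show 2 * u ∈ p.betaSet
        have : 2 * u = x := by omega
        rw [this]; exact hx
      · show ¬ 2 * (u - 1) ∈ p.betaSet
        have : 2 * (u - 1) = x - 2 := by omega
        rw [this]; exact hnx
      · omega
      · omega
  · -- x = 2u + 1 odd : the odd half moves
    have hodd : Hodd q.betaSet = insert u (Hodd p.betaSet \ {u + 1}) := by
      ext z
      simp only [Hodd, Set.mem_setOf_eq, hq, Set.mem_insert_iff, Set.mem_diff,
        Set.mem_singleton_iff]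
      constructor
      · rintro (h1 | ⟨h1, h2⟩)
        · left; omega
        · right; exact ⟨h1, by omega⟩
      · rintro (rfl | ⟨h1, h2⟩)
        · left; omega
        · right; exact ⟨h1, by omega⟩
    have hev : Hev q.betaSet = Hev p.betaSet := by
      ext z
      simp only [Hev, Set.mem_setOf_eq, hq, Set.mem_insert_iff, Set.mem_diff,
        Set.mem_singleton_iff]
      constructor
      · rintro (h1 | ⟨h1, h2⟩)
        · omega
        · exact h1
      · intro h1
        right; exact ⟨h1, by omega⟩
    constructor
    · rw [hodd]
      refine tcnt_move (Hodd_bdd p.betaSet_bdd) ?_ ?_ ?_ ?_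
      · show 2 * (u + 1) - 1 ∈ p.betaSet
        have : 2 * (u + 1) - 1 = x := by omega
        rw [this]; exact hx
      · show ¬ 2 * u - 1 ∈ p.betaSet
        have : 2 * u - 1 = x - 2 := by omega
        rw [this]; exact hnx
      · omega
      · omega
    · rw [hev]

lemma chain2_halves {p q : Partition} (h : Relation.ReflTransGen (RemoveHook 2) p q)
    {a b : ℤ} (hd : GDeep a p.betaSet) (hb : 2 * b + 1 ≤ a) :
    tcnt (Hodd q.betaSet) b = tcnt (Hodd p.betaSet) b ∧
    tcnt (Hev q.betaSet) b = tcnt (Hev p.betaSet) b := by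
  induction h with
  | refl => exact ⟨rfl, rfl⟩
  | tail h1 h2 ih =>
    have hdq := (chain_wcnt (e := 2) h1 hd).1
    have step := removeHook2_halves h2 hdq hb
    exact ⟨step.1.trans ih.1, step.2.trans ih.2⟩

lemma half_charges {lam qO qE : Partition} {t : ℕ} {cO cE vO vE : ℤ}
    (hchain : Relation.ReflTransGen (RemoveHook 2) lam (staircase t))
    (hO : qO.chargedBetaSet cO = Hodd lam.betaSet)
    (hE : qE.chargedBetaSet cE = Hev lam.betaSet)
    (hvO : Hodd ((staircase t).betaSet) = Set.Iic vO)
    (hvE : Hev ((staircase t).betaSet) = Set.Iic vE) :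
    cO = vO ∧ cE = vE := by
  obtain ⟨Nl, hNl⟩ := lam.eventually_zero
  obtain ⟨NO, hNO⟩ := qO.eventually_zero
  obtain ⟨NE, hNE⟩ := qE.eventually_zero
  have hdeep : GDeep (-(Nl : ℤ)) lam.betaSet := by
    rw [lam.betaSet_eq]
    exact lam.chargedBetaSet_deep 0 hNl (by omega)
  obtain ⟨b, hb1, hb2, hb3, hb4, hb5⟩ :
      ∃ b : ℤ, 2 * b + 1 ≤ -(Nl : ℤ) ∧ b ≤ cO - NO ∧ b ≤ cE - NE ∧ b ≤ vO ∧ b ≤ vE := by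
    refine ⟨min (min ((-(Nl : ℤ) - 1) / 2) (min (cO - NO) (cE - NE))) (min vO vE),
      by omega, by omega, by omega, by omega, by omega⟩
  have hch := chain2_halves hchain hdeep hb1
  have e1 : tcnt (Hodd lam.betaSet) b = (cO - b).toNat := by
    rw [← hO, qO.chargedBetaSet_tcnt cO hNO (by omega)]
  have e2 : tcnt (Hev lam.betaSet) b = (cE - b).toNat := by
    rw [← hE, qE.chargedBetaSet_tcnt cE hNE (by omega)]
  have e3 : tcnt (Hodd ((staircase t).betaSet)) b = (vO - b).toNat := by
    rw [hvO, tcnt_Iic]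
  have e4 : tcnt (Hev ((staircase t).betaSet)) b = (vE - b).toNat := by
    rw [hvE, tcnt_Iic]
  rw [e1, e3] at hch
  rw [e2, e4] at hch
  obtain ⟨f1, f2⟩ := hch
  constructor <;> omega

end Aux3

section Aux4

open Set

lemma exists_partition_of_beta {S : Set ℤ} {a : ℤ} (ha0 : a ≤ 0) (hd : GDeep a S)
    (hb : GBdd S) (hcnt : tcnt S a = (-a).toNat) : ∃ p : Partition, p.betaSet = S := by
  classical
  set L : ℕ := (-a).toNat with hLdef
  have hfin : (S ∩ {x : ℤ | a < x}).Finite := gbdd_win_finite hb a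
  set F : Finset ℤ := hfin.toFinset with hF
  have hcard : F.card = L := by
    rw [hF, ← Set.ncard_eq_toFinset_card _ hfin]
    exact hcnt
  set l : List ℤ := F.sort (· ≤ ·) with hl
  have hlen : l.length = L := by rw [hl, Finset.length_sort, hcard]
  have hsort : l.Pairwise (· < ·) := F.sortedLT_sort.pairwise
  have hmeml : ∀ x : ℤ, x ∈ l ↔ (x ∈ S ∧ a < x) := by
    intro x
    rw [hl, Finset.mem_sort, hF, Set.Finite.mem_toFinset]
    exact Iff.rfl
  set gf : ℕ → ℤ := fun m => if h : m < l.length then l.get ⟨m, h⟩ else 0 with hgf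
  have hgfeq : ∀ (m : ℕ) (h : m < l.length), gf m = l.get ⟨m, h⟩ := by
    intro m h
    rw [hgf]
    exact dif_pos h
  have hgetmem : ∀ m : ℕ, m < l.length → gf m ∈ S ∧ a < gf m := by
    intro m h
    rw [← hmeml, hgfeq m h]
    exact l.get_mem _
  have hmono : ∀ m : ℕ, m + 1 < l.length → gf m < gf (m + 1) := by
    intro m h
    rw [hgfeq m (by omega), hgfeq (m+1) h]
    exact List.pairwise_iff_get.mp hsort ⟨m, by omega⟩ ⟨m+1, h⟩ (by simp [Fin.lt_def])
  have gap : ∀ (d i : ℕ), i + d < l.length → gf i + (d : ℤ) ≤ gf (i + d) := by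
    intro d
    induction d with
    | zero => intro i hid; simp
    | succ d ih =>
      intro i hid
      have h1 := ih i (by omega)
      have h2 := hmono (i + d) (by omega)
      push_cast
      have h3 : i + (d + 1) = i + d + 1 := by omega
      rw [h3]
      omega
  have hlow : ∀ m : ℕ, m < l.length → a + 1 + (m : ℤ) ≤ gf m := by
    intro m hm
    have h0 : a + 1 ≤ gf 0 := (hgetmem 0 (by omega)).2
    have := gap m 0 (by omega)
    simp only [Nat.zero_add] at this
    omega
  have hLa : (L : ℤ) = -a := by omega
  refine ⟨⟨fun k => if k < L then (gf (L - 1 - k) + k).toNat else 0,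
    ?_, ⟨L, fun n hn => by rw [if_neg (by omega)]⟩⟩, ?_⟩
  · -- antitone
    intro i j hij
    by_cases hj : j < L
    · have hi : i < L := by omega
      rw [if_pos hi, if_pos hj]
      have hgap := gap (j - i) (L - 1 - j) (by omega)
      rw [show L - 1 - j + (j - i) = L - 1 - i from by omega] at hgap
      have hlj := hlow (L - 1 - j) (by omega)
      omega
    · rw [if_neg hj]
      omega
  · -- betaSet = S
    ext x
    constructor
    · rintro ⟨k, hk⟩
      simp only at hk
      by_cases hkL : k < L
      · rw [if_pos hkL] at hk
        have hlk := hlow (L - 1 - k) (by omega)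
        have hx : x = gf (L - 1 - k) := by omega
        rw [hx]
        exact (hgetmem _ (by omega)).1
      · rw [if_neg hkL] at hk
        apply hd
        omega
    · intro hx
      by_cases hxa : a < x
      · have hxl : x ∈ l := (hmeml x).mpr ⟨hx, hxa⟩
        obtain ⟨m, hm⟩ := List.mem_iff_get.mp hxl
        have hmL : m.val < L := by have := m.isLt; omega
        have hgx : gf m.val = x := by
          rw [hgfeq m.val m.isLt]
          convert hm using 2
        refine ⟨L - 1 - m.val, ?_⟩
        simp only
        rw [if_pos (by omega : L - 1 - m.val < L),
          show L - 1 - (L - 1 - m.val) = m.val from by omega, hgx]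
        have hlm := hlow m.val (by omega)
        omega
      · refine ⟨(-x).toNat, ?_⟩
        simp only
        rw [if_neg (by omega)]
        omega

lemma core_down_closed {e : ℕ} {c : Partition} (hc : IsECore e c) {x : ℤ}
    (hx : x ∈ c.betaSet) : x - e ∈ c.betaSet := by
  by_contra hnx
  obtain ⟨N, hN⟩ := c.eventually_zero
  have hdeepc : GDeep (-(N : ℤ)) c.betaSet := by
    rw [c.betaSet_eq]
    exact c.chargedBetaSet_deep 0 hN (by omega)
  set a : ℤ := min (-(N : ℤ)) (x - (e : ℤ) - 1) with ha
  have hxe : -(N:ℤ) < x - e ∨ True := Or.inr trivial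
  have hd' : GDeep a (insert (x - (e:ℤ)) (c.betaSet \ {x})) := by
    intro y hy
    refine Or.inr ⟨hdeepc y (by omega), ?_⟩
    simp only [Set.mem_singleton_iff]
    omega
  have hb' : GBdd (insert (x - (e:ℤ)) (c.betaSet \ {x})) := by
    obtain ⟨b0, hb0⟩ := c.betaSet_bdd
    refine ⟨max b0 (x - e), ?_⟩
    rintro y (rfl | ⟨hy, _⟩)
    · omega
    · have := hb0 y hy; omega
  have hxa : a < x - e := by
    have : ¬ (x - (e:ℤ) ≤ -(N:ℤ)) := fun hcon => hnx (hdeepc _ hcon)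
    omega
  have hcnt' : tcnt (insert (x - (e:ℤ)) (c.betaSet \ {x})) a = (-a).toNat := by
    rw [tcnt_move c.betaSet_bdd hx hnx (by omega) hxa]
    have := c.chargedBetaSet_tcnt 0 hN (a := a) (by omega)
    rw [c.betaSet_eq]
    rw [this]
    congr 1
    omega
  obtain ⟨mu, hmu⟩ := exists_partition_of_beta (by omega) hd' hb' hcnt'
  exact hc mu ⟨x, hx, hnx, by rw [hmu]⟩

noncomputable def msum (p : Partition) (a : ℤ) : ℕ :=
  ∑ v ∈ (gbdd_win_finite p.betaSet_bdd a).toFinset, (v - a).toNat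

lemma exists_core (e : ℕ) (hge : 1 ≤ e) (p : Partition) : ∃ c, HasECore e p c := by
  classical
  obtain ⟨N, hN⟩ := p.eventually_zero
  have hdeep : GDeep (-(N : ℤ)) p.betaSet := by
    rw [p.betaSet_eq]
    exact p.chargedBetaSet_deep 0 hN (by omega)
  suffices h : ∀ (n : ℕ) (q : Partition) (a : ℤ), GDeep a q.betaSet →
      msum q a ≤ n → ∃ c, HasECore e q c from
    h (msum p (-(N:ℤ))) p (-(N:ℤ)) hdeep le_rfl
  intro n
  induction n with
  | zero =>
    intro q a hdq hm
    by_cases hcore : IsECore e q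
    · exact ⟨q, Relation.ReflTransGen.refl, hcore⟩
    · exfalso
      rw [IsECore] at hcore
      push_neg at hcore
      obtain ⟨mu, x, hx, hnx, hq⟩ := hcore
      have hxa : a < x := by
        have h1 : ¬ (x - (e:ℤ) ≤ a) := fun hcon => hnx (hdq _ hcon)
        omega
      have hxF : x ∈ (gbdd_win_finite q.betaSet_bdd a).toFinset := by
        rw [Set.Finite.mem_toFinset]
        exact ⟨hx, hxa⟩
      have hle : (x - a).toNat ≤ msum q a :=
        Finset.single_le_sum (f := fun v => (v - a).toNat) (fun _ _ => Nat.zero_le _) hxF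
      omega
  | succ n ih =>
    intro q a hdq hm
    by_cases hcore : IsECore e q
    · exact ⟨q, Relation.ReflTransGen.refl, hcore⟩
    · rw [IsECore] at hcore
      push_neg at hcore
      obtain ⟨mu, hmu⟩ := hcore
      obtain ⟨x, hx, hnx, hq⟩ := hmu
      have hxea : a < x - e := by
        have h1 : ¬ (x - (e:ℤ) ≤ a) := fun hcon => hnx (hdq _ hcon)
        omega
      have hxa : a < x := by omega
      -- window finsets
      have hfq := gbdd_win_finite q.betaSet_bdd a
      have hfmu := gbdd_win_finite mu.betaSet_bdd a
      have hFeq : hfmu.toFinset = insert (x - (e:ℤ)) (hfq.toFinset.erase x) := by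
        ext y
        simp only [Set.Finite.mem_toFinset, Finset.mem_insert, Finset.mem_erase,
          Set.mem_inter_iff, Set.mem_setOf_eq, Set.Finite.mem_toFinset, hq,
          Set.mem_insert_iff, Set.mem_diff, Set.mem_singleton_iff]
        constructor
        · rintro ⟨(rfl | ⟨hy1, hy2⟩), hy3⟩
          · exact Or.inl rfl
          · exact Or.inr ⟨hy2, hy1, hy3⟩
        · rintro (rfl | ⟨hy1, hy2, hy3⟩)
          · exact ⟨Or.inl rfl, hxea⟩
          · exact ⟨Or.inr ⟨hy2, hy1⟩, hy3⟩
      have hxmem : x ∈ hfq.toFinset := by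
        rw [Set.Finite.mem_toFinset]
        exact ⟨hx, hxa⟩
      have hnotmem : (x - (e:ℤ)) ∉ hfq.toFinset.erase x := by
        intro hcon
        have := Finset.mem_of_mem_erase hcon
        rw [Set.Finite.mem_toFinset] at this
        exact hnx this.1
      have hsum1 : msum mu a = (x - e - a).toNat + ∑ v ∈ hfq.toFinset.erase x, (v - a).toNat := by
        rw [msum, hFeq, Finset.sum_insert hnotmem]
      have hsum2 : (x - a).toNat + ∑ v ∈ hfq.toFinset.erase x, (v - a).toNat = msum q a :=
        Finset.add_sum_erase _ (fun v => (v - a).toNat) hxmem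
      have hlt : msum mu a < msum q a := by omega
      obtain ⟨c, hc1, hc2⟩ := ih mu a (removeHook_deep ⟨x, hx, hnx, hq⟩ hdq) (by omega)
      exact ⟨c, Relation.ReflTransGen.head ⟨x, hx, hnx, hq⟩ hc1, hc2⟩

end Aux4

section Aux5

open Set

lemma core_mem_iff {e : ℕ} (hge : 1 ≤ e) {c : Partition} (hc : IsECore e c) {a x : ℤ}
    (hd : GDeep a c.betaSet) (hx : a < x) :
    x ∈ c.betaSet ↔
      ({y : ℤ | a < y ∧ y ≤ x ∧ (y : ZMod e) = (x : ZMod e)}).ncard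
        ≤ wcnt e c.betaSet ((x : ZMod e)) a := by
  have hM : ({y : ℤ | a < y ∧ y ≤ x ∧ (y : ZMod e) = (x : ZMod e)}).Finite :=
    (Set.finite_Ioc a x).subset (by rintro y ⟨h1, h2, _⟩; exact ⟨h1, h2⟩)
  have hdc : ∀ (k : ℕ) (z : ℤ), z ∈ c.betaSet → z - (e : ℤ) * k ∈ c.betaSet := by
    intro k
    induction k with
    | zero => intro z hz; simpa using hz
    | succ k ih =>
      intro z hz
      have h3 := core_down_closed hc (ih z hz)
      have : z - (e:ℤ) * (k+1 : ℕ) = z - (e:ℤ) * k - e := by push_cast; ring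
      rw [this]
      exact h3
  have hresdvd : ∀ y z : ℤ, (y : ZMod e) = (z : ZMod e) → (e : ℤ) ∣ (z - y) := by
    intro y z hy
    exact Int.ModEq.dvd ((ZMod.intCast_eq_intCast_iff y z e).mp hy)
  constructor
  · intro hxc
    have hsub : {y : ℤ | a < y ∧ y ≤ x ∧ (y : ZMod e) = (x : ZMod e)} ⊆
        c.betaSet ∩ {z : ℤ | a < z ∧ (z : ZMod e) = (x : ZMod e)} := by
      rintro y ⟨h1, h2, h3⟩
      obtain ⟨k, hk⟩ := hresdvd y x h3
      have hk0 : 0 ≤ k := by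
        by_contra hkneg
        push_neg at hkneg
        have : (e:ℤ) * k ≤ (e:ℤ) * (-1) := by
          apply mul_le_mul_of_nonneg_left (by omega) (by omega)
        omega
      have hy : y = x - (e:ℤ) * (k.toNat : ℕ) := by
        have : ((k.toNat : ℕ) : ℤ) = k := by omega
        rw [this]
        omega
      rw [hy]
      exact ⟨hdc k.toNat x hxc, by omega, by rw [← hy]; exact h3⟩
    exact Set.ncard_le_ncard hsub (gbdd_rwin_finite c.betaSet_bdd _ a)
  · intro hcnt
    by_contra hxc
    have hsub : c.betaSet ∩ {z : ℤ | a < z ∧ (z : ZMod e) = (x : ZMod e)} ⊆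
        {y : ℤ | a < y ∧ y ≤ x ∧ (y : ZMod e) = (x : ZMod e)} \ {x} := by
      rintro z ⟨hzc, hz1, hz2⟩
      have hzx : z ≠ x := fun h => hxc (h ▸ hzc)
      refine ⟨⟨hz1, ?_, hz2⟩, hzx⟩
      by_contra hgt
      push_neg at hgt
      obtain ⟨k, hk⟩ := hresdvd x z hz2.symm
      have hk0 : 0 ≤ k := by
        by_contra hkneg
        push_neg at hkneg
        have : (e:ℤ) * k ≤ (e:ℤ) * (-1) := by
          apply mul_le_mul_of_nonneg_left (by omega) (by omega)
        omega
      have hxz : x = z - (e:ℤ) * (k.toNat : ℕ) := by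
        have : ((k.toNat : ℕ) : ℤ) = k := by omega
        rw [this]
        omega
      exact hxc (hxz ▸ hdc k.toNat z hzc)
    have hle : wcnt e c.betaSet ((x : ZMod e)) a ≤
        ({y : ℤ | a < y ∧ y ≤ x ∧ (y : ZMod e) = (x : ZMod e)} \ {x}).ncard :=
      Set.ncard_le_ncard hsub hM.diff
    have hxM : x ∈ {y : ℤ | a < y ∧ y ≤ x ∧ (y : ZMod e) = (x : ZMod e)} :=
      ⟨hx, le_rfl, rfl⟩
    have hone := Set.ncard_diff_singleton_add_one hxM hM
    omega

lemma ecore_eq {e : ℕ} (hge : 1 ≤ e) {c1 c2 : Partition} (h1 : IsECore e c1) (h2 : IsECore e c2)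
    {a : ℤ} (hd1 : GDeep a c1.betaSet) (hd2 : GDeep a c2.betaSet)
    (hw : ∀ i : ZMod e, wcnt e c1.betaSet i a = wcnt e c2.betaSet i a) : c1 = c2 := by
  apply Partition.betaSet_inj
  ext x
  by_cases hxa : a < x
  · rw [core_mem_iff hge h1 hd1 hxa, core_mem_iff hge h2 hd2 hxa, hw]
  · exact iff_of_true (hd1 x (by omega)) (hd2 x (by omega))

end Aux5

section Aux6

open Set

/-- number of boxes of the charged partition `(p, s)` whose content has residue `i` mod `e`. -/
noncomputable def NB (e : ℕ) (p : Partition) (s : ℤ) (i : ZMod e) : ℕ :=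
  ({q : ℕ × ℕ | q.2 < p.part q.1 ∧ (((q.2 : ℤ) - (q.1 : ℤ) + s : ℤ) : ZMod e) = i}).ncard

lemma Partition.boxSet_finite (p : Partition) : p.boxSet.Finite := by
  obtain ⟨N, hN⟩ := p.eventually_zero
  refine ((Set.finite_Iio N).prod (Set.finite_Iio (p.part 0))).subset ?_
  rintro ⟨r, c⟩ hb
  have hb' : c < p.part r := hb
  have h1 : r < N := by
    by_contra hr
    push_neg at hr
    rw [hN r hr] at hb'
    omega
  have h2 : p.part r ≤ p.part 0 := p.antitone 0 r (Nat.zero_le r)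
  exact ⟨h1, by simp only [Set.mem_Iio]; omega⟩

lemma NBset_finite (e : ℕ) (p : Partition) (s : ℤ) (i : ZMod e) :
    ({q : ℕ × ℕ | q.2 < p.part q.1 ∧ (((q.2 : ℤ) - (q.1 : ℤ) + s : ℤ) : ZMod e) = i}).Finite :=
  p.boxSet_finite.subset (fun q hq => hq.1)

lemma content_lemma (e : ℕ) : ∀ (n : ℕ) (p : Partition), p.size = n → ∀ (s : ℤ) (N : ℕ),
    (∀ m, N ≤ m → p.part m = 0) → ∀ (a : ℤ), a ≤ s - N → ∀ i : ZMod e,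
    (NB e p s i : ℤ) - NB e p s (i+1)
      = (wcnt e (p.chargedBetaSet s) (i+1) a : ℤ) - wcnt e (Set.Iic s) (i+1) a := by
  intro n
  induction n with
  | zero =>
    intro p hsize s N hN a ha i
    have hz : ∀ k, p.part k = 0 := by
      intro k
      by_contra hk
      have hmem : (k, 0) ∈ p.boxSet := by
        show 0 < p.part k
        omega
      have hempty : p.boxSet = ∅ := (Set.ncard_eq_zero p.boxSet_finite).mp hsize
      rw [hempty] at hmem
      exact hmem
    have hNB : ∀ j : ZMod e, NB e p s j = 0 := by
      intro j
      rw [NB]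
      convert Set.ncard_empty (ℕ × ℕ)
      ext q
      simp only [Set.mem_setOf_eq, Set.mem_empty_iff_false, iff_false, not_and]
      intro hq
      rw [hz q.1] at hq
      omega
    have hcbs : p.chargedBetaSet s = Set.Iic s := by
      ext x
      constructor
      · rintro ⟨k, hk⟩
        rw [hz k] at hk
        simp only [Set.mem_Iic]
        omega
      · intro hx
        refine ⟨(s - x).toNat, ?_⟩
        rw [hz]
        simp only [Set.mem_Iic] at hx
        omega
    rw [hNB, hNB, hcbs]
    omega
  | succ n ih =>
    intro p hsize s N hN a ha i
    -- find the last nonzero part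
    obtain ⟨m0, hm0⟩ : ∃ m, p.part m ≠ 0 := by
      by_contra hc
      push_neg at hc
      have hempty : p.boxSet = ∅ := by
        ext q
        simp only [Set.mem_empty_iff_false, iff_false]
        intro hq
        have : q.2 < p.part q.1 := hq
        rw [hc q.1] at this
        omega
      have : p.size = 0 := by rw [Partition.size, hempty, Set.ncard_empty]
      omega
    have hj0 : ∃ j, p.part j = 0 := ⟨N, hN N le_rfl⟩
    classical
    set j := Nat.find hj0 with hjdef
    have hj : p.part j = 0 := Nat.find_spec hj0
    have hjmin : ∀ i', i' < j → p.part i' ≠ 0 := fun i' hi' => Nat.find_min hj0 hi'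
    have hjpos : j ≠ 0 := by
      intro hc
      apply hm0
      have := p.antitone 0 m0 (Nat.zero_le m0)
      rw [hc] at hj
      omega
    set k0 := j - 1 with hk0def
    have hk0 : p.part k0 ≠ 0 := hjmin k0 (by omega)
    have hk1 : p.part (k0 + 1) = 0 := by
      have : k0 + 1 = j := by omega
      rw [this, hj]
    have hk0N : k0 < N := by
      by_contra hc
      push_neg at hc
      exact hk0 (hN k0 hc)
    -- the smaller partition
    set p' : Partition := ⟨fun k => if k = k0 then p.part k0 - 1 else p.part k,
      by
        intro i1 j1 hij
        by_cases h1 : i1 = k0 <;> by_cases h2 : j1 = k0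
        · rw [if_pos h1, if_pos h2]
        · rw [if_pos h1, if_neg h2]
          have hj1 : k0 + 1 ≤ j1 := by omega
          have := p.antitone (k0 + 1) j1 hj1
          omega
        · rw [if_neg h1, if_pos h2]
          have := p.antitone i1 k0 (by omega)
          omega
        · rw [if_neg h1, if_neg h2]
          exact p.antitone i1 j1 hij,
      ⟨N, by
        intro m hm
        rw [if_neg (by omega)]
        exact hN m hm⟩⟩ with hp'def
    have hp'part : ∀ k, p'.part k = if k = k0 then p.part k0 - 1 else p.part k := fun k => rfl
    set Bx : ℕ × ℕ := (k0, p.part k0 - 1) with hBxdef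
    -- boxSet relation and size
    have hbox : p'.boxSet = p.boxSet \ {Bx} := by
      ext ⟨r, c⟩
      show c < p'.part r ↔ _
      rw [hp'part]
      simp only [Set.mem_diff, Set.mem_singleton_iff, Prod.mk.injEq, hBxdef]
      show _ ↔ (c < p.part r ∧ ¬(r = k0 ∧ c = p.part k0 - 1))
      by_cases hr : r = k0
      · subst hr
        rw [if_pos rfl]
        omega
      · rw [if_neg hr]
        omega
    have hBxbox : Bx ∈ p.boxSet := by
      show p.part k0 - 1 < p.part k0
      omega
    have hsize' : p'.size = n := by
      have := Set.ncard_diff_singleton_add_one hBxbox p.boxSet_finite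
      rw [Partition.size, hbox]
      rw [Partition.size] at hsize
      omega
    -- content of the removed box
    set x : ℤ := (p.part k0 : ℤ) + s - k0 with hxdef
    set c0 : ℤ := x - 1 with hc0def
    -- NB relation
    have hNBset : ∀ jr : ZMod e,
        {q : ℕ × ℕ | q.2 < p'.part q.1 ∧ (((q.2 : ℤ) - (q.1 : ℤ) + s : ℤ) : ZMod e) = jr}
          = {q : ℕ × ℕ | q.2 < p.part q.1 ∧ (((q.2 : ℤ) - (q.1 : ℤ) + s : ℤ) : ZMod e) = jr}
            \ {Bx} := by
      intro jr
      ext ⟨r, c⟩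
      simp only [Set.mem_setOf_eq, Set.mem_diff, Set.mem_singleton_iff, Prod.mk.injEq, hBxdef]
      by_cases hr : r = k0
      · subst hr
        rw [hp'part, if_pos rfl]
        constructor
        · rintro ⟨h1, h2⟩
          exact ⟨⟨by omega, h2⟩, by omega⟩
        · rintro ⟨⟨h1, h2⟩, h3⟩
          exact ⟨by omega, h2⟩
      · rw [hp'part, if_neg hr]
        constructor
        · rintro ⟨h1, h2⟩
          exact ⟨⟨h1, h2⟩, by omega⟩
        · rintro ⟨⟨h1, h2⟩, h3⟩
          exact ⟨h1, h2⟩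
    have hBxcont : (((Bx.2 : ℤ) - (Bx.1 : ℤ) + s : ℤ) : ZMod e) = ((c0 : ℤ) : ZMod e) := by
      congr 1
      show ((p.part k0 - 1 : ℕ) : ℤ) - (k0 : ℤ) + s = c0
      rw [hc0def, hxdef]
      omega
    have hNB : ∀ jr : ZMod e, (NB e p' s jr : ℤ)
        = (NB e p s jr : ℤ) - (if ((c0 : ℤ) : ZMod e) = jr then 1 else 0) := by
      intro jr
      rw [NB, NB, hNBset]
      by_cases hres : ((c0 : ℤ) : ZMod e) = jr
      · have hBxmem : Bx ∈ {q : ℕ × ℕ | q.2 < p.part q.1 ∧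
            (((q.2 : ℤ) - (q.1 : ℤ) + s : ℤ) : ZMod e) = jr} := by
          refine ⟨hBxbox, ?_⟩
          rw [hBxcont, hres]
        have := Set.ncard_diff_singleton_add_one hBxmem (NBset_finite e p s jr)
        rw [if_pos hres]
        omega
      · have hBxmem : Bx ∉ {q : ℕ × ℕ | q.2 < p.part q.1 ∧
            (((q.2 : ℤ) - (q.1 : ℤ) + s : ℤ) : ZMod e) = jr} := by
          rintro ⟨_, hcon⟩
          rw [hBxcont] at hcon
          exact hres hcon
        rw [Set.diff_singleton_eq_self hBxmem, if_neg hres]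
        omega
    -- β-set relation
    have hxmem : x ∈ p.chargedBetaSet s := ⟨k0, by rw [hxdef]⟩
    have hstrict := p.beta_strictAnti s
    have hxnot : x - 1 ∉ p.chargedBetaSet s := by
      rintro ⟨k, hk⟩
      rcases lt_trichotomy k k0 with hlt | heq | hgt
      · have := hstrict hlt
        simp only at this
        omega
      · subst heq
        omega
      · have hge : k0 + 1 ≤ k := by omega
        have h1 : (p.part k : ℤ) + s - k ≤ (p.part (k0+1) : ℤ) + s - (k0+1) :=
          hstrict.antitone hge
        rw [hk1] at h1
        omega
    have hcbs' : p'.chargedBetaSet s = insert (x - 1) (p.chargedBetaSet s \ {x}) := by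
      ext y
      constructor
      · rintro ⟨k, hk⟩
        rw [hp'part] at hk
        by_cases hkk : k = k0
        · subst hkk
          rw [if_pos rfl] at hk
          left
          rw [hk, hxdef]
          omega
        · rw [if_neg hkk] at hk
          right
          refine ⟨⟨k, hk⟩, ?_⟩
          simp only [Set.mem_singleton_iff]
          intro hcon
          rw [hcon, hxdef] at hk
          have : (p.part k : ℤ) + s - k = (p.part k0 : ℤ) + s - k0 := by omega
          exact hkk (hstrict.injective this)
      · rintro (rfl | ⟨⟨k, hk⟩, hy⟩)
        · refine ⟨k0, ?_⟩
          rw [hp'part, if_pos rfl, hxdef]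
          omega
        · simp only [Set.mem_singleton_iff] at hy
          refine ⟨k, ?_⟩
          rw [hp'part, if_neg ?_]
          · exact hk
          · intro hcon
            subst hcon
            rw [hxdef] at hy
            omega
    -- windows
    have hax1 : a < x - 1 := by
      rw [hxdef]
      omega
    have hwcnt := wcnt_move (e := e) (p.chargedBetaSet_bdd s) hxmem hxnot
      (by omega : a < x) hax1 (i + 1)
    rw [← hcbs'] at hwcnt
    -- cast identities for the residues
    have hresx : ((x : ℤ) : ZMod e) = ((c0 : ℤ) : ZMod e) + 1 := by
      rw [hc0def]
      push_cast
      ring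
    have hres1 : (((x - 1 : ℤ)) : ZMod e) = ((c0 : ℤ) : ZMod e) := by
      rw [hc0def]
    have hiff1 : (((x : ℤ)) : ZMod e) = i + 1 ↔ ((c0 : ℤ) : ZMod e) = i := by
      rw [hresx]
      constructor
      · intro h
        exact add_right_cancel h
      · intro h
        rw [h]
    -- put everything together
    have hIH := ih p' hsize' s N (fun m hm => by rw [hp'part, if_neg (by omega)]; exact hN m hm) a ha i
    rw [hNB i, hNB (i+1)] at hIH
    rw [hres1] at hwcnt
    by_cases hA : ((c0 : ℤ) : ZMod e) = i <;> by_cases hB : ((c0 : ℤ) : ZMod e) = i + 1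
    · rw [if_pos hA, if_pos hB] at hIH
      rw [if_pos hB, if_pos (hiff1.mpr hA)] at hwcnt
      omega
    · rw [if_pos hA, if_neg hB] at hIH
      rw [if_neg hB, if_pos (hiff1.mpr hA)] at hwcnt
      omega
    · rw [if_neg hA, if_pos hB] at hIH
      rw [if_pos hB, if_neg (fun hcon => hA (hiff1.mp hcon))] at hwcnt
      omega
    · rw [if_neg hA, if_neg hB] at hIH
      rw [if_neg hB, if_neg (fun hcon => hA (hiff1.mp hcon))] at hwcnt
      omega

end Aux6

section Aux7

open Set

lemma cbs_charge_shift (P : Partition) (c s : ℤ) :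
    P.chargedBetaSet s = {x : ℤ | x - (s - c) ∈ P.chargedBetaSet c} := by
  ext x
  constructor
  · rintro ⟨k, hk⟩
    exact ⟨k, by omega⟩
  · rintro ⟨k, hk⟩
    exact ⟨k, by omega⟩

lemma wcnt_cbs_charge (e : ℕ) (P : Partition) (c s : ℤ) (i : ZMod e) (b : ℤ) :
    wcnt e (P.chargedBetaSet c) i b
      = wcnt e (P.chargedBetaSet s) (i + ((s - c : ℤ) : ZMod e)) (b + (s - c)) := by
  rw [cbs_charge_shift P c s, wcnt_shift]
  congr 1
  · ring
  · ring

lemma wcnt_parity (e : ℕ) {S : Set ℤ} (hS : GBdd S) (b : ℤ) {j iO iE : ZMod e}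
    (hO : 2 * iO - 1 = j) (hE : 2 * iE = j)
    (hcan : ∀ z w : ZMod e, 2 * z = 2 * w → z = w) :
    wcnt e S j (2 * b) = wcnt e (Hodd S) iO b + wcnt e (Hev S) iE b := by
  have hsplit : S ∩ {x : ℤ | 2 * b < x ∧ (x : ZMod e) = j} =
      (S ∩ {x : ℤ | 2 * b < x ∧ (x : ZMod e) = j}) ∩ {x : ℤ | x % 2 = 1} ∪
      (S ∩ {x : ℤ | 2 * b < x ∧ (x : ZMod e) = j}) ∩ {x : ℤ | x % 2 = 0} := by
    ext x
    simp only [Set.mem_union, Set.mem_inter_iff, Set.mem_setOf_eq]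
    constructor
    · intro hx
      rcases (by omega : x % 2 = 1 ∨ x % 2 = 0) with hp | hp
      · exact Or.inl ⟨hx, hp⟩
      · exact Or.inr ⟨hx, hp⟩
    · rintro (⟨hx, _⟩ | ⟨hx, _⟩) <;> exact hx
  have hdisj : Disjoint
      ((S ∩ {x : ℤ | 2 * b < x ∧ (x : ZMod e) = j}) ∩ {x : ℤ | x % 2 = 1})
      ((S ∩ {x : ℤ | 2 * b < x ∧ (x : ZMod e) = j}) ∩ {x : ℤ | x % 2 = 0}) := by
    rw [Set.disjoint_left]
    rintro x ⟨_, h1⟩ ⟨_, h2⟩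
    simp only [Set.mem_setOf_eq] at h1 h2
    omega
  have hfin0 := gbdd_rwin_finite hS j (2 * b)
  have hodd_img : (S ∩ {x : ℤ | 2 * b < x ∧ (x : ZMod e) = j}) ∩ {x : ℤ | x % 2 = 1}
      = (fun z : ℤ => 2 * z - 1) '' (Hodd S ∩ {z : ℤ | b < z ∧ (z : ZMod e) = iO}) := by
    ext x
    simp only [Set.mem_inter_iff, Set.mem_setOf_eq, Set.mem_image, Hodd]
    constructor
    · rintro ⟨⟨hxS, hx1, hx2⟩, hx3⟩
      refine ⟨(x + 1) / 2, ⟨?_, by omega, ?_⟩, by omega⟩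
      · have : 2 * ((x + 1) / 2) - 1 = x := by omega
        rw [this]
        exact hxS
      · apply hcan
        have hxx : 2 * ((x + 1) / 2) - 1 = x := by omega
        have : ((2 * ((x + 1) / 2) - 1 : ℤ) : ZMod e) = j := by rw [hxx]; exact hx2
        push_cast at this
        rw [← hO] at this
        have h5 : (2 : ZMod e) * (((x + 1) / 2 : ℤ) : ZMod e) = 2 * iO := by
          have := this
          ring_nf at this ⊢
          linear_combination this
        exact h5
    · rintro ⟨z, ⟨hzS, hz1, hz2⟩, rfl⟩
      refine ⟨⟨hzS, by omega, ?_⟩, by omega⟩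
      push_cast
      rw [hz2, ← hO]
  have hev_img : (S ∩ {x : ℤ | 2 * b < x ∧ (x : ZMod e) = j}) ∩ {x : ℤ | x % 2 = 0}
      = (fun z : ℤ => 2 * z) '' (Hev S ∩ {z : ℤ | b < z ∧ (z : ZMod e) = iE}) := by
    ext x
    simp only [Set.mem_inter_iff, Set.mem_setOf_eq, Set.mem_image, Hev]
    constructor
    · rintro ⟨⟨hxS, hx1, hx2⟩, hx3⟩
      refine ⟨x / 2, ⟨?_, by omega, ?_⟩, by omega⟩
      · have : 2 * (x / 2) = x := by omega
        rw [this]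
        exact hxS
      · apply hcan
        have hxx : 2 * (x / 2) = x := by omega
        have : ((2 * (x / 2) : ℤ) : ZMod e) = j := by rw [hxx]; exact hx2
        push_cast at this
        rw [← hE] at this
        exact this
    · rintro ⟨z, ⟨hzS, hz1, hz2⟩, rfl⟩
      refine ⟨⟨hzS, by omega, ?_⟩, by omega⟩
      push_cast
      rw [hz2, ← hE]
  have hinjO : Function.Injective (fun z : ℤ => 2 * z - 1) := by
    intro z w hzw
    simp only at hzw
    omega
  have hinjE : Function.Injective (fun z : ℤ => 2 * z) := by
    intro z w hzw
    simp only at hzw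
    omega
  rw [wcnt, hsplit, Set.ncard_union_eq hdisj
    (hfin0.subset (by intro x hx; exact hx.1))
    (hfin0.subset (by intro x hx; exact hx.1)),
    hodd_img, hev_img, Set.ncard_image_of_injective _ hinjO,
    Set.ncard_image_of_injective _ hinjE, wcnt, wcnt]

lemma per_lam (e : ℕ) {lam P1 P2 : Partition} {s1 s2 v1 v2 : ℤ}
    (hO : P1.chargedBetaSet v1 = Hodd lam.betaSet)
    (hE : P2.chargedBetaSet v2 = Hev lam.betaSet)
    {j iO iE : ZMod e} (h2O : 2 * iO - 1 = j) (h2E : 2 * iE = j)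
    (hcan : ∀ z w : ZMod e, 2 * z = 2 * w → z = w) (b : ℤ) :
    wcnt e lam.betaSet j (2 * b)
      = wcnt e (P1.chargedBetaSet s1) (iO + ((s1 - v1 : ℤ) : ZMod e)) (b + (s1 - v1))
        + wcnt e (P2.chargedBetaSet s2) (iE + ((s2 - v2 : ℤ) : ZMod e)) (b + (s2 - v2)) := by
  rw [wcnt_parity e lam.betaSet_bdd b h2O h2E hcan, ← hO, ← hE,
    wcnt_cbs_charge e P1 v1 s1 iO b, wcnt_cbs_charge e P2 v2 s2 iE b]

lemma comp_zero (bp : Partition × Partition) : comp bp 0 = bp.1 := if_pos rfl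

lemma comp_one (bp : Partition × Partition) : comp bp 1 = bp.2 := if_neg (by decide)

lemma box_count_split (e : ℕ) (bp : Partition × Partition) (ch : ℤ × ℤ) (i : ZMod e) :
    ({b : Box | IsBoxOf bp b ∧ ((content ch b : ℤ) : ZMod e) = i}).ncard
      = NB e bp.1 ch.1 i + NB e bp.2 ch.2 i := by
  classical
  have hf2 : ∀ g : Fin 2, g = 0 ∨ g = 1 := by decide
  set A0 : Set (ℕ × ℕ) :=
    {q : ℕ × ℕ | q.2 < bp.1.part q.1 ∧ (((q.2 : ℤ) - (q.1 : ℤ) + ch.1 : ℤ) : ZMod e) = i} with hA0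
  set A1 : Set (ℕ × ℕ) :=
    {q : ℕ × ℕ | q.2 < bp.2.part q.1 ∧ (((q.2 : ℤ) - (q.1 : ℤ) + ch.2 : ℤ) : ZMod e) = i} with hA1
  have hc0 : ∀ q : ℕ × ℕ, content ch ((0 : Fin 2), q) = (q.2 : ℤ) - (q.1 : ℤ) + ch.1 :=
    fun q => rfl
  have hc1 : ∀ q : ℕ × ℕ, content ch ((1 : Fin 2), q) = (q.2 : ℤ) - (q.1 : ℤ) + ch.2 :=
    fun q => rfl
  have hb0 : ∀ q : ℕ × ℕ, IsBoxOf bp ((0 : Fin 2), q) ↔ q.2 < bp.1.part q.1 :=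
    fun q => Iff.rfl
  have hb1 : ∀ q : ℕ × ℕ, IsBoxOf bp ((1 : Fin 2), q) ↔ q.2 < bp.2.part q.1 :=
    fun q => Iff.rfl
  have hset : {b : Box | IsBoxOf bp b ∧ ((content ch b : ℤ) : ZMod e) = i}
      = (fun q : ℕ × ℕ => ((0 : Fin 2), q)) '' A0 ∪ (fun q : ℕ × ℕ => ((1 : Fin 2), q)) '' A1 := by
    ext bb
    obtain ⟨f, q⟩ := bb
    simp only [Set.mem_setOf_eq, Set.mem_union, Set.mem_image]
    rcases hf2 f with rfl | rfl
    · constructor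
      · rintro ⟨hb, hres⟩
        refine Or.inl ⟨q, ⟨(hb0 q).mp hb, ?_⟩, rfl⟩
        rw [← hres, hc0 q]
      · rintro (⟨q', ⟨hq1, hq2⟩, heq⟩ | ⟨q', ⟨hq1, hq2⟩, heq⟩)
        · have hq : q' = q := congrArg Prod.snd heq
          subst hq
          exact ⟨(hb0 q').mpr hq1, by rw [hc0 q']; exact hq2⟩
        · have : (1 : Fin 2) = 0 := congrArg Prod.fst heq
          exact absurd this (by decide)
    · constructor
      · rintro ⟨hb, hres⟩
        refine Or.inr ⟨q, ⟨(hb1 q).mp hb, ?_⟩, rfl⟩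
        rw [← hres, hc1 q]
      · rintro (⟨q', ⟨hq1, hq2⟩, heq⟩ | ⟨q', ⟨hq1, hq2⟩, heq⟩)
        · have : (0 : Fin 2) = 1 := congrArg Prod.fst heq
          exact absurd this (by decide)
        · have hq : q' = q := congrArg Prod.snd heq
          subst hq
          exact ⟨(hb1 q').mpr hq1, by rw [hc1 q']; exact hq2⟩
  have hdisj : Disjoint ((fun q : ℕ × ℕ => ((0 : Fin 2), q)) '' A0)
      ((fun q : ℕ × ℕ => ((1 : Fin 2), q)) '' A1) := by
    rw [Set.disjoint_left]
    rintro bb ⟨q0, _, h0⟩ ⟨q1, _, h1⟩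
    have e0 : (0 : Fin 2) = bb.1 := congrArg Prod.fst h0
    have e1 : (1 : Fin 2) = bb.1 := congrArg Prod.fst h1
    rw [← e0] at e1
    exact absurd e1 (by decide)
  have hinj0 : Function.Injective (fun q : ℕ × ℕ => ((0 : Fin 2), q)) := by
    intro q q' hq
    exact congrArg Prod.snd hq
  have hinj1 : Function.Injective (fun q : ℕ × ℕ => ((1 : Fin 2), q)) := by
    intro q q' hq
    exact congrArg Prod.snd hq
  rw [hset, Set.ncard_union_eq hdisj ((NBset_finite e bp.1 ch.1 i).image _)
    ((NBset_finite e bp.2 ch.2 i).image _),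
    Set.ncard_image_of_injective _ hinj0, Set.ncard_image_of_injective _ hinj1]
  rfl

lemma sum_identity (e : ℕ) {b1 b2 m1 m2 : Partition} {s1 s2 A : ℤ}
    {N1 N2 N3 N4 : ℕ}
    (hN1 : ∀ m, N1 ≤ m → b1.part m = 0) (hN2 : ∀ m, N2 ≤ m → b2.part m = 0)
    (hN3 : ∀ m, N3 ≤ m → m1.part m = 0) (hN4 : ∀ m, N4 ≤ m → m2.part m = 0)
    (hA1 : A ≤ s1 - N1) (hA2 : A ≤ s2 - N2) (hA3 : A ≤ s1 - N3) (hA4 : A ≤ s2 - N4)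
    (hbox : ∀ i : ZMod e, NB e b1 s1 i + NB e b2 s2 i = NB e m1 s1 i + NB e m2 s2 i) :
    ∀ i : ZMod e, wcnt e (b1.chargedBetaSet s1) i A + wcnt e (b2.chargedBetaSet s2) i A
      = wcnt e (m1.chargedBetaSet s1) i A + wcnt e (m2.chargedBetaSet s2) i A := by
  intro i
  have c1 := content_lemma e b1.size b1 rfl s1 N1 hN1 A hA1 (i - 1)
  have c2 := content_lemma e b2.size b2 rfl s2 N2 hN2 A hA2 (i - 1)
  have c3 := content_lemma e m1.size m1 rfl s1 N3 hN3 A hA3 (i - 1)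
  have c4 := content_lemma e m2.size m2 rfl s2 N4 hN4 A hA4 (i - 1)
  have hsub : i - 1 + 1 = i := by ring
  rw [hsub] at c1 c2 c3 c4
  have hb1 := hbox (i - 1)
  have hb2 := hbox i
  omega

end Aux7

section Aux8

open Set

lemma main_core_eq (e : ℕ) (he3 : 3 ≤ e) {u : ZMod e} (hu2 : (2 : ZMod e) * u = 1)
    (hcan : ∀ z w : ZMod e, 2 * z = 2 * w → z = w)
    {lam mu PO PE QO QE : Partition} {sO sE vO vE : ℤ}
    (hdO : (2 : ZMod e) * ((sO - vO : ℤ) : ZMod e) = -1)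
    (hdE : sE = vE)
    (hOl : PO.chargedBetaSet vO = Hodd lam.betaSet)
    (hEl : PE.chargedBetaSet vE = Hev lam.betaSet)
    (hOm : QO.chargedBetaSet vO = Hodd mu.betaSet)
    (hEm : QE.chargedBetaSet vE = Hev mu.betaSet)
    (hbox : ∀ i : ZMod e, NB e PO sO i + NB e PE sE i = NB e QO sO i + NB e QE sE i) :
    SameECore e lam mu := by
  classical
  obtain ⟨NPO, hNPO⟩ := PO.eventually_zero
  obtain ⟨NPE, hNPE⟩ := PE.eventually_zero
  obtain ⟨NQO, hNQO⟩ := QO.eventually_zero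
  obtain ⟨NQE, hNQE⟩ := QE.eventually_zero
  obtain ⟨NL, hNL⟩ := lam.eventually_zero
  obtain ⟨NM, hNM⟩ := mu.eventually_zero
  have hdEz : sE - vE = 0 := by omega
  obtain ⟨b, hb1, hb2, hb3, hb4, hb5, hb6⟩ :
      ∃ b : ℤ, 2 * b ≤ -(NL : ℤ) ∧ 2 * b ≤ -(NM : ℤ) ∧
        b + (sO - vO) ≤ sO - NPO ∧ b ≤ sE - NPE ∧
        b + (sO - vO) ≤ sO - NQO ∧ b ≤ sE - NQE := by
    refine ⟨min (min ((-(NL : ℤ)) / 2 - 1) ((-(NM : ℤ)) / 2 - 1))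
      (min (min (vO - NPO) (sE - NPE)) (min (vO - NQO) (sE - NQE))), ?_, ?_, ?_, ?_, ?_, ?_⟩
      <;> omega
  set A : ℤ := min (b + (sO - vO)) b with hA
  have hsum := sum_identity e hNPO hNPE hNQO hNQE
    (show A ≤ sO - NPO by omega) (show A ≤ sE - NPE by omega)
    (show A ≤ sO - NQO by omega) (show A ≤ sE - NQE by omega) hbox
  have hmain : ∀ j : ZMod e, wcnt e lam.betaSet j (2 * b) = wcnt e mu.betaSet j (2 * b) := by
    intro j
    have h2O : 2 * (u * (j + 1)) - 1 = j := by
      rw [← mul_assoc, hu2, one_mul]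
      ring
    have h2E : 2 * (u * j) = j := by
      rw [← mul_assoc, hu2, one_mul]
    have hres : u * (j + 1) + ((sO - vO : ℤ) : ZMod e) = u * j := by
      apply hcan
      have hh : (2 : ZMod e) * (u * (j + 1)) = j + 1 := by
        rw [← mul_assoc, hu2, one_mul]
      rw [mul_add, hh, hdO, h2E]
      ring
    have hPLlam := per_lam e (s1 := sO) (s2 := sE) hOl hEl h2O h2E hcan b
    have hPLmu := per_lam e (s1 := sO) (s2 := sE) hOm hEm h2O h2E hcan b
    rw [hres] at hPLlam hPLmu
    have hzE : ((sE - vE : ℤ) : ZMod e) = 0 := by rw [hdEz]; simp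
    rw [hzE, add_zero, hdEz, add_zero] at hPLlam hPLmu
    have hst1 := wcnt_strip (PO.chargedBetaSet_bdd sO)
      (PO.chargedBetaSet_deep sO hNPO (show b + (sO - vO) ≤ sO - NPO from hb3))
      (show A ≤ b + (sO - vO) from by omega) (u * j)
    have hst2 := wcnt_strip (PE.chargedBetaSet_bdd sE)
      (PE.chargedBetaSet_deep sE hNPE (show b ≤ sE - NPE from hb4))
      (show A ≤ b from by omega) (u * j)
    have hst3 := wcnt_strip (QO.chargedBetaSet_bdd sO)
      (QO.chargedBetaSet_deep sO hNQO (show b + (sO - vO) ≤ sO - NQO from hb5))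
      (show A ≤ b + (sO - vO) from by omega) (u * j)
    have hst4 := wcnt_strip (QE.chargedBetaSet_bdd sE)
      (QE.chargedBetaSet_deep sE hNQE (show b ≤ sE - NQE from hb6))
      (show A ≤ b from by omega) (u * j)
    have hS := hsum (u * j)
    omega
  obtain ⟨cl, hcl⟩ := exists_core e (by omega) lam
  obtain ⟨cm, hcm⟩ := exists_core e (by omega) mu
  have hdeepL : GDeep (2 * b) lam.betaSet := by
    rw [lam.betaSet_eq]
    exact lam.chargedBetaSet_deep 0 hNL (by omega)
  have hdeepM : GDeep (2 * b) mu.betaSet := by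
    rw [mu.betaSet_eq]
    exact mu.chargedBetaSet_deep 0 hNM (by omega)
  have hchainL := chain_wcnt hcl.1 hdeepL
  have hchainM := chain_wcnt hcm.1 hdeepM
  have heq : cl = cm := by
    refine ecore_eq (by omega) hcl.2 hcm.2 hchainL.1 hchainM.1 ?_
    intro i
    rw [hchainL.2 i, hchainM.2 i]
    exact hmain i
  exact ⟨cl, hcl, heq ▸ hcm⟩

end Aux8


/-- If `λ, μ` are partitions of the same size `n` with the same 2-core
`Δ_t`, and the multisets of residues mod `e` of the contents of the boxes of `τ(λ)` and
`τ(μ)` agree, then `λ` and `μ` have the same `e`-core. -/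
theorem same_combinatorial_block_same_ecore
    (e t n : ℕ) (he : Odd e) (he3 : 3 ≤ e)
    (lam mu : Partition) (hl : lam.size = n) (hm : mu.size = n)
    (bl bm : Partition × Partition)
    (htl : IsTwistedQuotient t lam bl) (htm : IsTwistedQuotient t mu bm)
    (h : ∀ i : ZMod e,
      {b : Box | IsBoxOf bl b ∧ (content (tauCharge e t) b : ZMod e) = i}.ncard =
      {b : Box | IsBoxOf bm b ∧ (content (tauCharge e t) b : ZMod e) = i}.ncard) :
    SameECore e lam mu := by
  classical
  obtain ⟨w, hw⟩ := he
  set u : ZMod e := (((e + 1) / 2 : ℕ) : ZMod e) with hudef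
  have hu2 : (2 : ZMod e) * u = 1 := by
    have hnat : 2 * ((e + 1) / 2) = e + 1 := by omega
    have hc : ((2 * ((e + 1) / 2) : ℕ) : ZMod e) = ((e + 1 : ℕ) : ZMod e) := by rw [hnat]
    push_cast at hc
    rw [ZMod.natCast_self] at hc
    rw [hudef]
    rw [hc]
    ring
  have hcan : ∀ z w : ZMod e, 2 * z = 2 * w → z = w := by
    intro z w hzw
    have h2 : u * (2 * z) = z := by rw [← mul_assoc, mul_comm u 2, hu2, one_mul]
    have h3 : u * (2 * w) = w := by rw [← mul_assoc, mul_comm u 2, hu2, one_mul]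
    rw [← h2, ← h3, hzw]
  obtain ⟨hLcore, hLq⟩ := htl
  obtain ⟨hMcore, hMq⟩ := htm
  have hbox0 : ∀ i : ZMod e,
      NB e bl.1 (tauCharge e t).1 i + NB e bl.2 (tauCharge e t).2 i
        = NB e bm.1 (tauCharge e t).1 i + NB e bm.2 (tauCharge e t).2 i := by
    intro i
    rw [← box_count_split, ← box_count_split]
    exact h i
  rcases Nat.mod_two_eq_zero_or_one t with ht | ht
  · -- t even
    rw [if_pos ht] at hLq hMq
    obtain ⟨⟨cO, hcO⟩, ⟨cE, hcE⟩⟩ := hLq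
    obtain ⟨⟨cO', hcO'⟩, ⟨cE', hcE'⟩⟩ := hMq
    have htau : tauCharge e t = (-(((t : ℤ) + 1 + e) / 2), (t : ℤ) / 2) := by
      rw [tauCharge, if_pos ht]
    have hvO := Hodd_staircase_even ht
    have hvE := Hev_staircase_even ht
    have hhalfL := half_charges hLcore.1 hcO hcE hvO hvE
    have hhalfM := half_charges hMcore.1 hcO' hcE' hvO hvE
    rw [hhalfL.1] at hcO
    rw [hhalfL.2] at hcE
    rw [hhalfM.1] at hcO'
    rw [hhalfM.2] at hcE'
    have hdO : (2 : ZMod e) *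
        (((-(((t : ℤ) + 1 + e) / 2)) - (-((t : ℤ) / 2)) : ℤ) : ZMod e) = -1 := by
      have hint : 2 * ((-(((t : ℤ) + 1 + e) / 2)) - (-((t : ℤ) / 2))) = -1 - e := by omega
      calc (2 : ZMod e) * (((-(((t : ℤ) + 1 + e) / 2)) - (-((t : ℤ) / 2)) : ℤ) : ZMod e)
          = ((2 * ((-(((t : ℤ) + 1 + e) / 2)) - (-((t : ℤ) / 2))) : ℤ) : ZMod e) := by
            push_cast
            ring
        _ = ((-1 - (e : ℤ) : ℤ) : ZMod e) := by rw [hint]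
        _ = -1 := by
            push_cast
            rw [ZMod.natCast_self]
            ring
    refine main_core_eq e he3 hu2 hcan
      (sO := -(((t : ℤ) + 1 + e) / 2)) (sE := (t : ℤ) / 2)
      (vO := -((t : ℤ) / 2)) (vE := (t : ℤ) / 2)
      hdO rfl hcO hcE hcO' hcE' ?_
    intro i
    have hb := hbox0 i
    rw [htau] at hb
    exact hb
  · -- t odd
    rw [if_neg (by omega)] at hLq hMq
    obtain ⟨⟨cO, hcO⟩, ⟨cE, hcE⟩⟩ := hLq
    obtain ⟨⟨cO', hcO'⟩, ⟨cE', hcE'⟩⟩ := hMq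
    have htau : tauCharge e t = (-(((t : ℤ) + 1) / 2), ((t : ℤ) + e) / 2) := by
      rw [tauCharge, if_neg (by omega)]
    have hvO := Hodd_staircase_odd ht
    have hvE := Hev_staircase_odd ht
    have hhalfL := half_charges hLcore.1 hcO hcE hvO hvE
    have hhalfM := half_charges hMcore.1 hcO' hcE' hvO hvE
    rw [hhalfL.1] at hcO
    rw [hhalfL.2] at hcE
    rw [hhalfM.1] at hcO'
    rw [hhalfM.2] at hcE'
    have hdO : (2 : ZMod e) *
        (((((t : ℤ) + e) / 2) - (((t : ℤ) + 1) / 2) : ℤ) : ZMod e) = -1 := by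
      have hint : 2 * (((((t : ℤ) + e) / 2) - (((t : ℤ) + 1) / 2))) = e - 1 := by omega
      calc (2 : ZMod e) * (((((t : ℤ) + e) / 2) - (((t : ℤ) + 1) / 2) : ℤ) : ZMod e)
          = ((2 * (((((t : ℤ) + e) / 2) - (((t : ℤ) + 1) / 2))) : ℤ) : ZMod e) := by
            push_cast
            ring
        _ = (((e : ℤ) - 1 : ℤ) : ZMod e) := by rw [hint]
        _ = -1 := by
            push_cast
            rw [ZMod.natCast_self]
            ring
    refine main_core_eq e he3 hu2 hcan
      (sO := ((t : ℤ) + e) / 2) (sE := -(((t : ℤ) + 1) / 2))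
      (vO := ((t : ℤ) + 1) / 2) (vE := -(((t : ℤ) + 1) / 2))
      hdO rfl hcO hcE hcO' hcE' ?_
    intro i
    have hb := hbox0 i
    rw [htau] at hb
    simp only at hb
    omega


end GUnBranching
end

section
/- Let e ≥ 3 be odd and let m be a positive multiple of e. For every integer 0 ≤ j ≤ m−1, the e-core of the partition (3) ⊔ 2^j ⊔ 1^{2m−2j−2} (one part equal to 3, j parts equal to 2, and 2m−2j−2 parts equal to 1) is the partition (1) if and only if j ≡ 1 or −2 (mod e). -/
namespace GUnBranching

-- Lemma A
lemma beta_threeTwoOne (a b c : ℕ) :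
    (threeTwoOne a b c).betaSet =
      Set.Iic (3 : ℤ) \ {3 - (a:ℤ), 2 - (a:ℤ) - b, 1 - (a:ℤ) - b - c} := by
  ext z
  constructor
  · rintro ⟨k, rfl⟩
    simp only [threeTwoOne, Set.mem_diff, Set.mem_Iic, Set.mem_insert_iff,
      Set.mem_singleton_iff]
    split_ifs with h1 h2 h3 <;> push_cast <;> omega
  · rintro ⟨hz, hne⟩
    simp only [Set.mem_insert_iff, Set.mem_singleton_iff, not_or] at hne
    simp only [Set.mem_Iic] at hz
    obtain ⟨h1, h2, h3⟩ := hne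
    rcases le_or_gt (4 - (a:ℤ)) z with h | h
    · exact ⟨(3 - z).toNat, by simp only [threeTwoOne]; split_ifs <;> push_cast <;> omega⟩
    · rcases le_or_gt (3 - (a:ℤ) - b) z with h' | h'
      · exact ⟨(2 - z).toNat, by simp only [threeTwoOne]; split_ifs <;> push_cast <;> omega⟩
      · rcases le_or_gt (2 - (a:ℤ) - b - c) z with h'' | h''
        · exact ⟨(1 - z).toNat, by simp only [threeTwoOne]; split_ifs <;> push_cast <;> omega⟩
        · exact ⟨(-z).toNat, by simp only [threeTwoOne]; split_ifs <;> push_cast <;> omega⟩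




/-- partition with hole set {r1, r2, r3}, r3 < r2 < r1 ≤ 3 -/
def hp (r1 r2 r3 : ℤ) : Partition :=
  threeTwoOne (3 - r1).toNat (r1 - r2 - 1).toNat (r2 - r3 - 1).toNat

lemma hp_beta {r1 r2 r3 : ℤ} (h32 : r3 < r2) (h21 : r2 < r1) (h13 : r1 ≤ 3) :
    (hp r1 r2 r3).betaSet = Set.Iic (3 : ℤ) \ {r1, r2, r3} := by
  rw [hp, beta_threeTwoOne]
  have e1 : 3 - ((3 - r1).toNat : ℤ) = r1 := by omega
  have e2 : 2 - ((3 - r1).toNat : ℤ) - (r1 - r2 - 1).toNat = r2 := by omega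
  have e3 : 1 - ((3 - r1).toNat : ℤ) - (r1 - r2 - 1).toNat - (r2 - r3 - 1).toNat = r3 := by
    omega
  rw [e1, e2, e3]

/-- partition with hole set {p, q, r} unsorted (p,q,r distinct, ≤ 3) -/
noncomputable def hp3 (p q r : ℤ) : Partition :=
  hp (max p (max q r)) (p + q + r - max p (max q r) - min p (min q r)) (min p (min q r))

lemma hp3_beta {p q r : ℤ} (hpq : p ≠ q) (hpr : p ≠ r) (hqr : q ≠ r)
    (hp' : p ≤ 3) (hq' : q ≤ 3) (hr' : r ≤ 3) :
    (hp3 p q r).betaSet = Set.Iic (3 : ℤ) \ {p, q, r} := by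
  rw [hp3, hp_beta (by omega) (by omega) (by omega)]
  congr 1
  ext z
  simp only [Set.mem_insert_iff, Set.mem_singleton_iff]
  omega


lemma step_lemma {e : ℕ} (he : 0 < e) {p q r : ℤ} (hpq : p ≠ q)
    (hp' : p ≤ 3) (hq' : q ≤ 3) (hrp : r ≠ p) (hrq : r ≠ q)
    (hxp : r + e ≠ p) (hxq : r + e ≠ q) (hx3 : r + e ≤ 3)
    {lam mu : Partition}
    (hl : lam.betaSet = Set.Iic (3 : ℤ) \ {p, q, r})
    (hm : mu.betaSet = Set.Iic (3 : ℤ) \ {p, q, r + e}) :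
    RemoveHook e lam mu := by
  have he1 : (1 : ℤ) ≤ e := by exact_mod_cast he
  refine ⟨r + e, ?_, ?_, ?_⟩
  · rw [hl]
    simp only [Set.mem_diff, Set.mem_Iic, Set.mem_insert_iff, Set.mem_singleton_iff]
    omega
  · rw [hl]
    simp only [Set.mem_diff, Set.mem_Iic, Set.mem_insert_iff, Set.mem_singleton_iff]
    omega
  · rw [hl, hm]
    ext z
    simp only [Set.mem_insert_iff, Set.mem_diff, Set.mem_Iic, Set.mem_singleton_iff]
    omega

lemma raise_lemma {e : ℕ} (he : 0 < e) {p q : ℤ} (hpq : p ≠ q)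
    (hp' : p ≤ 3) (hq' : q ≤ 3) :
    ∀ (k : ℕ), 1 ≤ k → ∀ (r : ℤ), r + e * k ≤ 3 →
    (∀ i : ℕ, i ≤ k → r + e * i ≠ p ∧ r + e * i ≠ q) →
    ∀ lam mu : Partition, lam.betaSet = Set.Iic (3 : ℤ) \ {p, q, r} →
    mu.betaSet = Set.Iic (3 : ℤ) \ {p, q, r + e * k} →
    Relation.ReflTransGen (RemoveHook e) lam mu := by
  have he1 : (1 : ℤ) ≤ e := by exact_mod_cast he
  intro k
  induction k with
  | zero => omega
  | succ n ih =>
    intro _ r htop hcond lam mu hl hm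
    rcases Nat.eq_or_lt_of_le (show 1 ≤ n + 1 from by omega) with h1 | h1
    · -- n = 0 : single step
      have hn : n = 0 := by omega
      subst hn
      refine Relation.ReflTransGen.single ?_
      have h0 := hcond 0 (by omega)
      have h1' := hcond 1 (by omega)
      push_cast at h0 h1' htop hm ⊢
      simp only [mul_zero, add_zero, mul_one] at h0 h1' htop hm
      exact step_lemma he hpq hp' hq' h0.1 h0.2 h1'.1 h1'.2 htop hl hm
    · -- n ≥ 1 : first step, then induction
      have hn1 : 1 ≤ n := by omega
      have hstep1 : r + (e : ℤ) * 1 ≤ 3 := by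
        have : (e : ℤ) * 1 ≤ e * (n+1) := by
          have : (1 : ℤ) ≤ (n:ℤ) + 1 := by omega
          nlinarith
        push_cast at htop ⊢
        omega
      have hmid : ((hp3 p q (r + e)).betaSet) = Set.Iic (3:ℤ) \ {p, q, r + e} := by
        have h1' := hcond 1 (by omega)
        push_cast at h1'
        simp only [mul_one] at h1'
        exact hp3_beta (by omega) (by omega) (by omega) hp' hq' (by push_cast at hstep1; omega)
      have first : RemoveHook e lam (hp3 p q (r + e)) := by
        have h0 := hcond 0 (by omega)
        have h1' := hcond 1 (by omega)
        simp only [Nat.cast_zero, mul_zero, add_zero, Nat.cast_one, mul_one] at h0 h1'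
        exact step_lemma he hpq hp' hq' h0.1 h0.2 h1'.1 h1'.2
          (by push_cast at hstep1; omega) hl hmid
      have rest : Relation.ReflTransGen (RemoveHook e) (hp3 p q (r + e)) mu := by
        apply ih hn1 (r + e) (by push_cast at htop ⊢; ring_nf; ring_nf at htop; omega)
          ?_ _ _ hmid (by rw [hm]; congr 2; push_cast; ring)
        intro i hi
        have h := hcond (i + 1) (by omega)
        push_cast at h ⊢
        have key : (e:ℤ) * ((i:ℤ) + 1) = e * i + e := by ring
        constructor
        · intro hc; exact h.1 (by omega)
        · intro hc; exact h.2 (by omega)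
      exact Relation.ReflTransGen.head first rest



lemma beta_column1 : (column 1).betaSet = Set.Iic (3 : ℤ) \ {3, 2, 0} := by
  have h := beta_threeTwoOne 0 0 1
  rw [column, h]
  norm_num

lemma isECore_column1 {e : ℕ} (he3 : 3 ≤ e) : IsECore e (column 1) := by
  rintro mu ⟨x, hx, hxe, -⟩
  have he : (3 : ℤ) ≤ e := by exact_mod_cast he3
  rw [beta_column1] at hx hxe
  apply hxe
  simp only [Set.mem_diff, Set.mem_Iic, Set.mem_insert_iff, Set.mem_singleton_iff] at hx ⊢
  omega

/-- residue indicator -/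
def cnt (e : ℕ) (x : ℤ) (r : ZMod e) : ℕ := if (x : ZMod e) = r then 1 else 0

def HInv (e : ℕ) (u v : ℤ) (S : Set ℤ) : Prop :=
  ∃ a b c : ℤ, a ≤ 3 ∧ b ≤ 3 ∧ c ≤ 3 ∧ a ≠ b ∧ a ≠ c ∧ b ≠ c ∧
    S = Set.Iic 3 \ {a, b, c} ∧
    ∀ r : ZMod e, cnt e a r + cnt e b r + cnt e c r = cnt e 2 r + cnt e u r + cnt e v r

lemma cnt_shift {e : ℕ} {x a : ℤ} (h : x = a + e) (r : ZMod e) : cnt e x r = cnt e a r := by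
  have hx : ((x : ℤ) : ZMod e) = ((a : ℤ) : ZMod e) := by
    subst h; push_cast; simp
  unfold cnt
  rw [hx]

lemma inv_step {e : ℕ} (he3 : 3 ≤ e) {u v : ℤ} {lam mu : Partition}
    (h : RemoveHook e lam mu) (hI : HInv e u v lam.betaSet) : HInv e u v mu.betaSet := by
  obtain ⟨x, hx, hxe, hmu⟩ := h
  obtain ⟨a, b, c, ha, hb, hc, hab, hac, hbc, hS, hcnt⟩ := hI
  have he : (3 : ℤ) ≤ e := by exact_mod_cast he3
  rw [hS] at hx hxe hmu
  simp only [Set.mem_diff, Set.mem_Iic, Set.mem_insert_iff, Set.mem_singleton_iff] at hx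
  have hmem : x - e = a ∨ x - e = b ∨ x - e = c := by
    by_contra hcon
    apply hxe
    simp only [Set.mem_diff, Set.mem_Iic, Set.mem_insert_iff, Set.mem_singleton_iff]
    omega
  rcases hmem with hm | hm | hm
  · refine ⟨x, b, c, by omega, hb, hc, by omega, by omega, hbc, ?_, ?_⟩
    · rw [hmu]; ext z
      simp only [Set.mem_insert_iff, Set.mem_diff, Set.mem_Iic, Set.mem_singleton_iff]
      omega
    · intro r
      rw [cnt_shift (show x = a + e by omega) r]
      exact hcnt r
  · refine ⟨a, x, c, ha, by omega, hc, by omega, hac, by omega, ?_, ?_⟩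
    · rw [hmu]; ext z
      simp only [Set.mem_insert_iff, Set.mem_diff, Set.mem_Iic, Set.mem_singleton_iff]
      omega
    · intro r
      rw [cnt_shift (show x = b + e by omega) r]
      exact hcnt r
  · refine ⟨a, b, x, ha, hb, by omega, hab, by omega, by omega, ?_, ?_⟩
    · rw [hmu]; ext z
      simp only [Set.mem_insert_iff, Set.mem_diff, Set.mem_Iic, Set.mem_singleton_iff]
      omega
    · intro r
      rw [cnt_shift (show x = c + e by omega) r]
      exact hcnt r

lemma inv_chain {e : ℕ} (he3 : 3 ≤ e) {u v : ℤ} {lam cor : Partition}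
    (h : Relation.ReflTransGen (RemoveHook e) lam cor)
    (hbase : HInv e u v lam.betaSet) : HInv e u v cor.betaSet := by
  induction h with
  | refl => exact hbase
  | tail _ hstep ih => exact inv_step he3 hstep ih


lemma final_extract {e m j : ℕ} (he3 : 3 ≤ e) (hm3 : 3 ≤ m) (hj : j + 1 ≤ m)
    (hI : HInv e (1 - (j:ℤ)) ((j:ℤ) + 2 - 2*m) (column 1).betaSet) :
    j % e = 1 ∨ (j + 2) % e = 0 := by
  obtain ⟨a, b, c, ha, hb, hc, hab, hac, hbc, hS, hcnt⟩ := hI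
  rw [beta_column1] at hS
  have hmem : ∀ z : ℤ, (z ≤ 3 ∧ ¬(z = 3 ∨ z = 2 ∨ z = 0)) ↔
      (z ≤ 3 ∧ ¬(z = a ∨ z = b ∨ z = c)) := by
    intro z
    have := Set.ext_iff.mp hS z
    simpa only [Set.mem_diff, Set.mem_Iic, Set.mem_insert_iff, Set.mem_singleton_iff]
      using this
  have ha3 : a = 3 ∨ a = 2 ∨ a = 0 := by have := hmem a; omega
  have hb3 : b = 3 ∨ b = 2 ∨ b = 0 := by have := hmem b; omega
  have hc3 : c = 3 ∨ c = 2 ∨ c = 0 := by have := hmem c; omega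
  have key : ∀ r : ZMod e, cnt e 3 r + cnt e 0 r
      = cnt e (1 - (j:ℤ)) r + cnt e ((j:ℤ) + 2 - 2*m) r := by
    intro r
    have h := hcnt r
    rcases ha3 with h1 | h1 | h1 <;> rcases hb3 with h2 | h2 | h2 <;>
      rcases hc3 with h3 | h3 | h3 <;> subst h1 <;> subst h2 <;> subst h3 <;> omega
  have hu := key (((1 - (j:ℤ)) : ℤ) : ZMod e)
  have hcu : cnt e (1 - (j:ℤ)) (((1 - (j:ℤ)) : ℤ) : ZMod e) = 1 := by unfold cnt; rw [if_pos rfl]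
  by_cases h3 : ((3:ℤ) : ZMod e) = (((1 - (j:ℤ)) : ℤ) : ZMod e)
  · right
    have hd : (e:ℤ) ∣ (1 - (j:ℤ)) - 3 := (ZMod.intCast_eq_intCast_iff _ _ _).mp h3 |>.dvd
    have hd2 : (e:ℤ) ∣ ((j:ℤ) + 2) := by
      have := hd.neg_right
      rw [show -((1 - (j:ℤ)) - 3) = (j:ℤ) + 2 by ring] at this
      exact this
    have hd3 : e ∣ (j + 2) := by exact_mod_cast hd2
    obtain ⟨w, hw⟩ := hd3
    rw [hw]
    exact Nat.mul_mod_right e w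
  · by_cases h0 : ((0:ℤ) : ZMod e) = (((1 - (j:ℤ)) : ℤ) : ZMod e)
    · left
      have hd : (e:ℤ) ∣ (1 - (j:ℤ)) - 0 := (ZMod.intCast_eq_intCast_iff _ _ _).mp h0 |>.dvd
      obtain ⟨w, hw⟩ := hd
      have he : (3:ℤ) ≤ e := by exact_mod_cast he3
      have hwneg : (0:ℤ) ≤ -w := by
        by_contra hcon
        push_neg at hcon
        have h1 : (e:ℤ) * 1 ≤ (e:ℤ) * w := by
          apply mul_le_mul_of_nonneg_left (by omega) (by positivity)
        rw [mul_one] at h1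
        omega
      have hj1 : (j:ℤ) = (e:ℤ) * ((-w).toNat : ℤ) + 1 := by
        rw [Int.toNat_of_nonneg hwneg, mul_neg]
        omega
      have hjn : j = e * (-w).toNat + 1 := by exact_mod_cast hj1
      rw [hjn, Nat.mul_add_mod, Nat.mod_eq_of_lt (by omega)]
    · exfalso
      have e3 : cnt e 3 (((1 - (j:ℤ)) : ℤ) : ZMod e) = 0 := by unfold cnt; rw [if_neg h3]
      have e0 : cnt e 0 (((1 - (j:ℤ)) : ℤ) : ZMod e) = 0 := by unfold cnt; rw [if_neg h0]
      omega



/-- For `e ≥ 3` odd and `m` a positive multiple of `e`, and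
`0 ≤ j ≤ m-1`, the `e`-core of `(3) ⊔ 2^j ⊔ 1^{2m-2j-2}` is the partition `(1)` iff
`j ≡ 1` or `-2 (mod e)`. -/
theorem ecore_three_two_column_one_iff
    (e m : ℕ) (he : Odd e) (he3 : 3 ≤ e) (hm : 0 < m) (hem : e ∣ m)
    (j : ℕ) (hj : j + 1 ≤ m) :
    HasECore e (threeTwoOne 1 j (2 * m - 2 * j - 2)) (column 1) ↔
      (j % e = 1 ∨ (j + 2) % e = 0) := by
  have hm3 : 3 ≤ m := le_trans he3 (Nat.le_of_dvd hm hem)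
  have hepos : 0 < e := by omega
  have heZ : (3:ℤ) ≤ e := by exact_mod_cast he3
  obtain ⟨s, hs⟩ := hem
  have hs1 : 1 ≤ s := by
    rcases Nat.eq_zero_or_pos s with h | h
    · rw [h, mul_zero] at hs; omega
    · exact h
  have hes : (e:ℤ) * s = m := by exact_mod_cast hs.symm
  have hlam : (threeTwoOne 1 j (2 * m - 2 * j - 2)).betaSet =
      Set.Iic 3 \ {2, 1 - (j:ℤ), (j:ℤ) + 2 - 2*m} := by
    rw [beta_threeTwoOne]
    congr 1
    ext z
    simp only [Set.mem_insert_iff, Set.mem_singleton_iff]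
    omega
  constructor
  · rintro ⟨hrtg, -⟩
    apply final_extract he3 hm3 hj
    apply inv_chain he3 hrtg
    exact ⟨2, 1 - (j:ℤ), (j:ℤ) + 2 - 2*m, by omega, by omega, by omega,
      by omega, by omega, by omega, hlam, fun r => rfl⟩
  · intro hor
    refine ⟨?_, isECore_column1 he3⟩
    by_cases hA : (j + 2) % e = 0
    · -- strategy A : move 1-j up to 3, then j+2-2m up to 0
      obtain ⟨t, ht⟩ : ∃ t, j + 2 = e * t :=
        ⟨(j+2)/e, (Nat.div_mul_cancel (Nat.dvd_of_mod_eq_zero hA)).symm ▸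
          (Nat.mul_div_cancel' (Nat.dvd_of_mod_eq_zero hA)).symm⟩
      have het : (e:ℤ) * t = (j:ℤ) + 2 := by exact_mod_cast ht.symm
      have ht1 : 1 ≤ t := by
        rcases Nat.eq_zero_or_pos t with h | h
        · rw [h, mul_zero] at ht; omega
        · exact h
      have hmid : (hp3 2 ((j:ℤ) + 2 - 2*m) 3).betaSet =
          Set.Iic 3 \ {2, (j:ℤ) + 2 - 2*m, 3} :=
        hp3_beta (by omega) (by omega) (by omega) (by omega) (by omega) (by omega)
      have h33 : 1 - (j:ℤ) + e * t = 3 := by omega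
      have hlam' : (threeTwoOne 1 j (2 * m - 2 * j - 2)).betaSet =
          Set.Iic 3 \ {2, (j:ℤ) + 2 - 2*m, 1 - (j:ℤ)} := by
        rw [hlam]; congr 1; ext z
        simp only [Set.mem_insert_iff, Set.mem_singleton_iff]; tauto
      have phase1 : Relation.ReflTransGen (RemoveHook e)
          (threeTwoOne 1 j (2 * m - 2 * j - 2)) (hp3 2 ((j:ℤ) + 2 - 2*m) 3) := by
        apply raise_lemma hepos (show (2:ℤ) ≠ (j:ℤ) + 2 - 2*m by omega) (by omega)
          (by omega) t ht1 (1 - (j:ℤ)) (by omega) ?_ _ _ hlam' (by rw [h33]; exact hmid)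
        intro i hi
        have hi' : (e:ℤ) * i ≤ (e:ℤ) * t :=
          mul_le_mul_of_nonneg_left (by exact_mod_cast hi) (by positivity)
        have hnn : (0:ℤ) ≤ (e:ℤ) * i := by positivity
        constructor
        · intro hcon
          have hd : (e:ℤ) ∣ 1 := ⟨(t:ℤ) - i, by rw [mul_sub]; omega⟩
          have := Int.le_of_dvd one_pos hd
          omega
        · intro hcon
          omega
      -- phase 2
      have ht2s : t ≤ 2 * s := by
        have h2m : e * (2 * s) = 2 * m := by rw [hs]; ring
        have : e * t ≤ e * (2 * s) := by omega
        exact Nat.le_of_mul_le_mul_left this hepos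
      have hcast : (((2*s - t : ℕ)):ℤ) = 2*(s:ℤ) - t := by omega
      have hk2 : (e:ℤ) * ((2*s - t : ℕ):ℤ) = 2*(m:ℤ) - j - 2 := by
        rw [hcast]
        linear_combination 2 * hes - het
      have hk21 : 1 ≤ 2*s - t := by
        rcases Nat.eq_zero_or_pos (2*s - t) with h | h
        · rw [h] at hk2; push_cast at hk2; omega
        · exact h
      have h00 : (j:ℤ) + 2 - 2*m + e * ((2*s - t : ℕ):ℤ) = 0 := by omega
      have phase2 : Relation.ReflTransGen (RemoveHook e)
          (hp3 2 ((j:ℤ) + 2 - 2*m) 3) (column 1) := by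
        apply raise_lemma hepos (show (2:ℤ) ≠ 3 by norm_num) (by omega) (by omega)
          (2*s - t) hk21 ((j:ℤ) + 2 - 2*m) (by omega) ?_ _ _
          (by rw [hmid]; congr 1; ext z;
              simp only [Set.mem_insert_iff, Set.mem_singleton_iff]; tauto)
          (by rw [h00, beta_column1]; congr 1; ext z;
              simp only [Set.mem_insert_iff, Set.mem_singleton_iff]; tauto)
        intro i hi
        have hi' : (e:ℤ) * i ≤ (e:ℤ) * ((2*s - t : ℕ):ℤ) :=
          mul_le_mul_of_nonneg_left (by exact_mod_cast hi) (by positivity)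
        have hnn : (0:ℤ) ≤ (e:ℤ) * i := by positivity
        omega
      exact phase1.trans phase2
    · -- strategy B : j % e = 1
      have hB : j % e = 1 := by tauto
      have he4 : e ≠ 3 := by
        intro h3
        subst h3
        omega
      have he4' : (e:ℤ) ≠ 3 := by exact_mod_cast he4
      obtain ⟨t, ht⟩ : ∃ t, j = e * t + 1 := by
        have := Nat.div_add_mod j e
        exact ⟨j / e, by omega⟩
      have het : (e:ℤ) * t = (j:ℤ) - 1 := by
        have : (j:ℤ) = (e:ℤ) * t + 1 := by exact_mod_cast ht
        omega
      have ht2s : t ≤ 2 * s := by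
        have h2m : e * (2 * s) = 2 * m := by rw [hs]; ring
        have : e * t ≤ e * (2 * s) := by omega
        exact Nat.le_of_mul_le_mul_left this hepos
      have hcast : (((2*s - t : ℕ)):ℤ) = 2*(s:ℤ) - t := by omega
      have hk1 : (e:ℤ) * ((2*s - t : ℕ):ℤ) = 2*(m:ℤ) - j + 1 := by
        rw [hcast]
        linear_combination 2 * hes - het
      have hk11 : 1 ≤ 2*s - t := by
        rcases Nat.eq_zero_or_pos (2*s - t) with h | h
        · rw [h] at hk1; push_cast at hk1; omega
        · exact h
      have h33 : (j:ℤ) + 2 - 2*m + e * ((2*s - t : ℕ):ℤ) = 3 := by omega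
      have cond1 : ∀ i : ℕ, i ≤ 2*s - t →
          (j:ℤ) + 2 - 2*m + e * i ≠ 2 ∧ (j:ℤ) + 2 - 2*m + e * i ≠ 1 - (j:ℤ) := by
        intro i hi
        have hi' : (e:ℤ) * i ≤ (e:ℤ) * ((2*s - t : ℕ):ℤ) :=
          mul_le_mul_of_nonneg_left (by exact_mod_cast hi) (by positivity)
        have hnn : (0:ℤ) ≤ (e:ℤ) * i := by positivity
        constructor
        · intro hcon
          have hd : (e:ℤ) ∣ 1 := ⟨((2*s - t : ℕ):ℤ) - i, by rw [mul_sub]; omega⟩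
          have := Int.le_of_dvd one_pos hd
          omega
        · intro hcon
          have hd : (e:ℤ) ∣ 3 :=
            ⟨((2*s - t : ℕ):ℤ) - i - t, by rw [mul_sub, mul_sub]; omega⟩
          have := Int.le_of_dvd (by norm_num) hd
          omega
      rcases Nat.eq_zero_or_pos t with ht0 | ht0
      · -- t = 0, j = 1 : a single phase suffices
        have hj1 : j = 1 := by rw [ht0, mul_zero] at ht; omega
        apply raise_lemma hepos (show (2:ℤ) ≠ 1 - (j:ℤ) by omega) (by omega)
          (by omega) (2*s - t) hk11 ((j:ℤ) + 2 - 2*m) (by omega) cond1 _ _ hlam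
        rw [h33, beta_column1]
        congr 1
        ext z
        simp only [Set.mem_insert_iff, Set.mem_singleton_iff]
        omega
      · -- t ≥ 1 : two phases
        have hmid : (hp3 2 (1 - (j:ℤ)) 3).betaSet =
            Set.Iic 3 \ {2, 1 - (j:ℤ), 3} :=
          hp3_beta (by omega) (by omega) (by omega) (by omega) (by omega) (by omega)
        have phase1 : Relation.ReflTransGen (RemoveHook e)
            (threeTwoOne 1 j (2 * m - 2 * j - 2)) (hp3 2 (1 - (j:ℤ)) 3) := by
          apply raise_lemma hepos (show (2:ℤ) ≠ 1 - (j:ℤ) by omega) (by omega)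
            (by omega) (2*s - t) hk11 ((j:ℤ) + 2 - 2*m) (by omega) cond1 _ _ hlam
          rw [h33]
          exact hmid
        have h0t : 1 - (j:ℤ) + e * t = 0 := by omega
        have hmid' : (hp3 2 (1 - (j:ℤ)) 3).betaSet =
            Set.Iic 3 \ {2, 3, 1 - (j:ℤ)} := by
          rw [hmid]; ext z
          simp only [Set.mem_diff, Set.mem_Iic, Set.mem_insert_iff, Set.mem_singleton_iff]
          omega
        have hcol' : (column 1).betaSet =
            Set.Iic 3 \ {2, 3, 1 - (j:ℤ) + e * t} := by
          rw [beta_column1]; ext z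
          simp only [Set.mem_diff, Set.mem_Iic, Set.mem_insert_iff, Set.mem_singleton_iff]
          omega
        have phase2 : Relation.ReflTransGen (RemoveHook e)
            (hp3 2 (1 - (j:ℤ)) 3) (column 1) := by
          apply raise_lemma hepos (show (2:ℤ) ≠ 3 by norm_num) (by omega) (by omega)
            t ht0 (1 - (j:ℤ)) (by omega) ?_ _ _ hmid' hcol'
          intro i hi
          have hi' : (e:ℤ) * i ≤ (e:ℤ) * t :=
            mul_le_mul_of_nonneg_left (by exact_mod_cast hi) (by positivity)
          have hnn : (0:ℤ) ≤ (e:ℤ) * i := by positivity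
          omega
        exact phase1.trans phase2

end GUnBranching
end
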